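/- arXiv:2307.00559 — 6 statements merged into one kernel-verified Lean document; each statement's English description precedes it below -/
import Mathlib

section
/- Let η : ℕ → ℝ be a negligible function with 0 < η(n) < 1 for all n. Then there exists a negligible function ξ : ℕ → ℝ such that for every n ∈ ℕ and every real x with η(n) ≤ x ≤ 1, the binary entropy satisfies h(x − η(n)) ≥ h(x) − ξ(n). -/
/-- A function `η : ℕ → ℝ` is negligible if for every `c : ℕ` there exists `N : ℕ`
such that for all `n > N`, `η n < n ^ (-c)`. -/
def Negligible (η : ℕ → ℝ) : Prop :=
  ∀ c : ℕ, ∃ N : ℕ, ∀ n : ℕ, n > N → η n < (n : ℝ) ^ (-(c : ℤ))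

/-- The binary entropy function `h(x) = -x log x - (1-x) log (1-x)` (with the
convention `0 · log 0 = 0`, automatic since `Real.log 0 = 0`). -/
noncomputable def binEnt (x : ℝ) : ℝ :=
  -x * Real.log x - (1 - x) * Real.log (1 - x)

-- subadditivity of f t = -t log t
lemma negMulLog_subadd (a b : ℝ) (ha : 0 ≤ a) (hb : 0 ≤ b) :
    -(a + b) * Real.log (a + b) ≤ -a * Real.log a + -b * Real.log b := by
  rcases eq_or_lt_of_le ha with h | h
  · simp [← h]
  rcases eq_or_lt_of_le hb with h' | h'
  · simp [← h']
  have h1 : -a * Real.log (a+b) ≤ -a * Real.log a := by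
    have := Real.log_le_log h (by linarith : a ≤ a + b)
    nlinarith
  have h2 : -b * Real.log (a+b) ≤ -b * Real.log b := by
    have := Real.log_le_log h' (by linarith : b ≤ a + b)
    nlinarith
  nlinarith

lemma oneSub_part (a b : ℝ) (ha : 0 ≤ a) (hb : 0 ≤ b) (hab : a + b ≤ 1) :
    -(1 - a - b) * Real.log (1 - a - b) ≤
      -(1 - a) * Real.log (1 - a) + -(1 - b) * Real.log (1 - b) := by
  rcases eq_or_lt_of_le (by linarith : (0:ℝ) ≤ a + b) with h | hs
  · have ha0 : a = 0 := by linarith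
    have hb0 : b = 0 := by linarith
    simp [ha0, hb0]
  set s := a + b with hsdef
  have hm : (1 : ℝ) - s ∈ Set.Ici (0:ℝ) := by simp; linarith
  have h1 : (1 : ℝ) ∈ Set.Ici (0:ℝ) := by simp
  have hconv := Real.convexOn_mul_log.2 hm h1
  have hw1 : (0:ℝ) ≤ a/s := by positivity
  have hw2 : (0:ℝ) ≤ b/s := by positivity
  have hw3 : a/s + b/s = 1 := by field_simp; exact hsdef.symm
  have hw3' : b/s + a/s = 1 := by linarith
  have hA := hconv hw1 hw2 hw3
  have hB := hconv hw2 hw1 hw3'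
  have e1 : (a/s) • (1 - s) + (b/s) • (1:ℝ) = 1 - a := by
    simp only [smul_eq_mul]; rw [div_mul_eq_mul_div, mul_one, ← add_div, div_eq_iff hs.ne', hsdef]; ring
  have e2 : (b/s) • (1 - s) + (a/s) • (1:ℝ) = 1 - b := by
    simp only [smul_eq_mul]; rw [div_mul_eq_mul_div, mul_one, ← add_div, div_eq_iff hs.ne', hsdef]; ring
  rw [e1] at hA
  rw [e2] at hB
  simp only [smul_eq_mul, Real.log_one, mul_zero, mul_one, add_zero] at hA hB
  have hsum : (1-a) * Real.log (1-a) + (1-b) * Real.log (1-b) ≤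
      (a/s + b/s) * ((1-s) * Real.log (1-s)) := by nlinarith
  have : a/s + b/s = 1 := by field_simp; exact hsdef.symm
  rw [this, one_mul] at hsum
  have he : (1:ℝ) - s = 1 - a - b := by rw [hsdef]; ring
  rw [he] at hsum
  linarith


lemma binEnt_subadd (a b : ℝ) (ha : 0 ≤ a) (hb : 0 ≤ b) (hab : a + b ≤ 1) :
    binEnt (a + b) ≤ binEnt a + binEnt b := by
  have h1 := negMulLog_subadd a b ha hb
  have h2 := oneSub_part a b ha hb hab
  have e : (1:ℝ) - (a+b) = 1 - a - b := by ring
  unfold binEnt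
  rw [e]
  nlinarith

lemma binEnt_le_sqrt (t : ℝ) (h0 : 0 < t) (h1 : t < 1) :
    binEnt t ≤ 3 * Real.sqrt t := by
  have hst : 0 < Real.sqrt t := Real.sqrt_pos.2 h0
  have hlog : Real.log ((Real.sqrt t)⁻¹) ≤ (Real.sqrt t)⁻¹ - 1 :=
    Real.log_le_sub_one_of_pos (by positivity)
  have hls : Real.log ((Real.sqrt t)⁻¹) = - (Real.log t / 2) := by
    rw [Real.log_inv, Real.log_sqrt h0.le]
  have hA : -t * Real.log t ≤ 2 * Real.sqrt t := by
    have h2 : - Real.log t ≤ 2 * (Real.sqrt t)⁻¹ := by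
      rw [hls] at hlog; linarith
    have h3 : -t * Real.log t ≤ t * (2 * (Real.sqrt t)⁻¹) := by nlinarith
    have h4 : t * (2 * (Real.sqrt t)⁻¹) = 2 * Real.sqrt t := by
      have : Real.sqrt t * Real.sqrt t = t := Real.mul_self_sqrt h0.le
      field_simp
      nlinarith
    linarith [h3, h4.le]
  have hB : -(1 - t) * Real.log (1 - t) ≤ t := by
    have hpos : (0:ℝ) < 1 - t := by linarith
    have hl : Real.log ((1-t)⁻¹) ≤ (1-t)⁻¹ - 1 := Real.log_le_sub_one_of_pos (by positivity)
    have hli : Real.log ((1-t)⁻¹) = - Real.log (1-t) := Real.log_inv _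
    rw [hli] at hl
    have : (1-t) * (-Real.log (1-t)) ≤ (1-t) * ((1-t)⁻¹ - 1) := by nlinarith
    have he : (1-t) * ((1-t)⁻¹ - 1) = t := by field_simp; ring
    nlinarith
  have hts : t ≤ Real.sqrt t := by
    have h := Real.mul_self_sqrt h0.le
    nlinarith [Real.sqrt_le_one.2 h1.le, hst]
  unfold binEnt
  linarith


/-- If `η` is negligible with `0 < η n < 1` for all `n`, then there exists a negligible
function `ξ` such that for every `n` and every `x` with `η n ≤ x ≤ 1`,
`h (x - η n) ≥ h x - ξ n`. -/
theorem binEnt_shift_negligible (η : ℕ → ℝ)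
    (hpos : ∀ n, 0 < η n) (hlt : ∀ n, η n < 1) (hneg : Negligible η) :
    ∃ ξ : ℕ → ℝ, Negligible ξ ∧
      ∀ n : ℕ, ∀ x : ℝ, η n ≤ x → x ≤ 1 → binEnt (x - η n) ≥ binEnt x - ξ n := by
  refine ⟨fun n => binEnt (η n), ?_, ?_⟩
  · intro c
    obtain ⟨N, hN⟩ := hneg (2 * c + 2)
    refine ⟨max N 3, fun n hn => ?_⟩
    have hn4 : 4 ≤ n := by
      have := le_max_right N 3
      omega
    have hp0 : (0:ℝ) < n := by positivity
    have hp4 : (4:ℝ) ≤ n := by exact_mod_cast hn4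
    have hne : (n:ℝ) ≠ 0 := ne_of_gt hp0
    have hη := hN n (by omega)
    have he : (n:ℝ) ^ (-((2 * c + 2 : ℕ) : ℤ)) =
        ((n:ℝ) ^ (-((c:ℤ) + 1))) * ((n:ℝ) ^ (-((c:ℤ) + 1))) := by
      rw [← zpow_add₀ hne]
      congr 1
      push_cast
      ring
    have hzp : (0:ℝ) < (n:ℝ) ^ (-((c:ℤ) + 1)) := zpow_pos hp0 _
    have hsq : Real.sqrt (η n) < (n:ℝ) ^ (-((c:ℤ) + 1)) := by
      rw [he] at hη
      calc Real.sqrt (η n) < Real.sqrt (((n:ℝ) ^ (-((c:ℤ)+1))) * ((n:ℝ) ^ (-((c:ℤ)+1)))) :=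
            Real.sqrt_lt_sqrt (hpos n).le hη
        _ = (n:ℝ) ^ (-((c:ℤ)+1)) := Real.sqrt_mul_self hzp.le
    have h1 : binEnt (η n) ≤ 3 * Real.sqrt (η n) := binEnt_le_sqrt _ (hpos n) (hlt n)
    have h2 : 3 * (n:ℝ) ^ (-((c:ℤ) + 1)) ≤ (n:ℝ) ^ (-(c:ℤ)) := by
      have he2 : (n:ℝ) ^ (-((c:ℤ) + 1)) = (n:ℝ) ^ (-(c:ℤ)) * ((n:ℝ))⁻¹ := by
        rw [← zpow_neg_one, ← zpow_add₀ hne]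
        congr 1
        ring
      rw [he2]
      have hzc : (0:ℝ) < (n:ℝ) ^ (-(c:ℤ)) := zpow_pos hp0 _
      have hinv : ((n:ℝ))⁻¹ ≤ 1/4 := by
        rw [inv_le_iff_one_le_mul₀ hp0] <;> nlinarith
      nlinarith
    linarith
  · intro n x hx1 hx2
    have h := binEnt_subadd (x - η n) (η n) (by linarith) (hpos n).le (by linarith)
    have : x - η n + η n = x := by ring
    rw [this] at h
    linarith
end

section
/- Let V be a finite-dimensional complex inner product space, let U₁ and U₂ be self-adjoint unitary operators on V, and let L be a normal operator on V satisfying [L, U₁] = [L, U₂] = 0. Then there exists a finite family (H_α) of pairwise orthogonal subspaces of V whose internal direct sum equals V, such that dim H_α ≤ 2 for every α, and such that for every α and every ψ ∈ H_α one has U₁ψ ∈ H_α, U₂ψ ∈ H_α and Lψ ∈ H_α. -/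
open Module

variable {V : Type} [NormedAddCommGroup V] [InnerProductSpace ℂ V] [FiniteDimensional ℂ V]

local notation "⟪" x ", " y "⟫" => @inner ℂ _ _ x y

lemma normal_ker_aux (T : V →ₗ[ℂ] V)
    (h : LinearMap.adjoint T ∘ₗ T = T ∘ₗ LinearMap.adjoint T) (x : V) (hx : T x = 0) :
    LinearMap.adjoint T x = 0 := by
  have hc : T (LinearMap.adjoint T x) = LinearMap.adjoint T (T x) := by
    have := congrArg (fun f => f x) h
    simpa using this.symm
  have key : ⟪LinearMap.adjoint T x, LinearMap.adjoint T x⟫ = ⟪T x, T x⟫ := by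
    rw [LinearMap.adjoint_inner_left, hc, LinearMap.adjoint_inner_right]
  rw [hx] at key
  simpa [inner_self_eq_zero] using key

lemma exists_eigen_on (T : V →ₗ[ℂ] V) (K : Submodule ℂ V) (hK : K ≠ ⊥)
    (hT : ∀ x ∈ K, T x ∈ K) :
    ∃ (μ : ℂ) (v : V), v ∈ K ∧ v ≠ 0 ∧ T v = μ • v := by
  haveI : Nontrivial K := Submodule.nontrivial_iff_ne_bot.mpr hK
  obtain ⟨μ, hμ⟩ := Module.End.exists_eigenvalue (T.restrict hT)
  obtain ⟨v, hv⟩ := hμ.exists_hasEigenvector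
  refine ⟨μ, v, v.2, by simpa using hv.2, ?_⟩
  have h2 := congrArg (Subtype.val) hv.apply_eq_smul
  simpa [LinearMap.restrict_apply] using h2

lemma jordan_key (U₁ U₂ L : V →ₗ[ℂ] V)
    (hU₁sa : LinearMap.adjoint U₁ = U₁) (hU₁u : U₁ ∘ₗ U₁ = LinearMap.id)
    (hU₂sa : LinearMap.adjoint U₂ = U₂) (hU₂u : U₂ ∘ₗ U₂ = LinearMap.id)
    (hLnorm : LinearMap.adjoint L ∘ₗ L = L ∘ₗ LinearMap.adjoint L)
    (hLU₁ : L ∘ₗ U₁ = U₁ ∘ₗ L) (hLU₂ : L ∘ₗ U₂ = U₂ ∘ₗ L) :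
    ∀ (n : ℕ) (K : Submodule ℂ V), finrank ℂ K ≤ n →
      (∀ x ∈ K, U₁ x ∈ K) → (∀ x ∈ K, U₂ x ∈ K) → (∀ x ∈ K, L x ∈ K) →
      (∀ x ∈ K, LinearMap.adjoint L x ∈ K) →
      ∃ (k : ℕ) (H : Fin k → Submodule ℂ V),
        (∀ α β, α ≠ β → ∀ x ∈ H α, ∀ y ∈ H β, (inner ℂ x y : ℂ) = 0) ∧
        (⨆ α, H α) = K ∧
        (∀ α, Module.finrank ℂ (H α) ≤ 2) ∧
        (∀ α, ∀ ψ ∈ H α, U₁ ψ ∈ H α ∧ U₂ ψ ∈ H α ∧ L ψ ∈ H α) := by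
  -- pointwise versions
  have hLU₁' : ∀ x, L (U₁ x) = U₁ (L x) := fun x => congrArg (fun f => f x) hLU₁
  have hLU₂' : ∀ x, L (U₂ x) = U₂ (L x) := fun x => congrArg (fun f => f x) hLU₂
  have hU₁u' : ∀ x, U₁ (U₁ x) = x := fun x => congrArg (fun f => f x) hU₁u
  have hU₂u' : ∀ x, U₂ (U₂ x) = x := fun x => congrArg (fun f => f x) hU₂u
  -- L* acts as conj lam on eigenvectors of L
  have hker : ∀ (lam : ℂ) (x : V), L x = lam • x →
      LinearMap.adjoint L x = (starRingEnd ℂ) lam • x := by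
    intro lam x hx
    set T : V →ₗ[ℂ] V := L - lam • LinearMap.id with hT
    have hid : LinearMap.adjoint (LinearMap.id : V →ₗ[ℂ] V) = LinearMap.id := by
      rw [← Module.End.one_eq_id, ← LinearMap.star_eq_adjoint, star_one]
    have hTadj : LinearMap.adjoint T =
        LinearMap.adjoint L - (starRingEnd ℂ) lam • LinearMap.id := by
      rw [hT, map_sub, LinearEquiv.map_smulₛₗ, hid]
    have hTnorm : LinearMap.adjoint T ∘ₗ T = T ∘ₗ LinearMap.adjoint T := by
      rw [hTadj, hT]
      ext y
      have h1 : LinearMap.adjoint L (L y) = L (LinearMap.adjoint L y) :=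
        congrArg (fun f => f y) hLnorm
      simp only [LinearMap.comp_apply, LinearMap.sub_apply, LinearMap.smul_apply,
        LinearMap.id_apply, map_sub, map_smul, h1]
      module
    have hx0 : T x = 0 := by simp [hT, hx]
    have h2 := normal_ker_aux T hTnorm x hx0
    rw [hTadj] at h2
    have h3 : LinearMap.adjoint L x - (starRingEnd ℂ) lam • x = 0 := by simpa using h2
    exact sub_eq_zero.mp h3
  -- adjoint L commutes with U₁, U₂
  have hL'U₁ : ∀ x, LinearMap.adjoint L (U₁ x) = U₁ (LinearMap.adjoint L x) := by
    intro x
    have := congrArg LinearMap.adjoint hLU₁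
    rw [LinearMap.adjoint_comp, LinearMap.adjoint_comp, hU₁sa] at this
    exact (congrArg (fun f => f x) this).symm
  have hL'U₂ : ∀ x, LinearMap.adjoint L (U₂ x) = U₂ (LinearMap.adjoint L x) := by
    intro x
    have := congrArg LinearMap.adjoint hLU₂
    rw [LinearMap.adjoint_comp, LinearMap.adjoint_comp, hU₂sa] at this
    exact (congrArg (fun f => f x) this).symm
  intro n
  induction n with
  | zero =>
    intro K hrk _ _ _ _
    have hK : K = ⊥ := Submodule.finrank_eq_zero.mp (Nat.le_zero.mp hrk)
    exact ⟨0, Fin.elim0, fun α => α.elim0, by simp [hK], fun α => α.elim0, fun α => α.elim0⟩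
  | succ n IH =>
    intro K hrk hKU₁ hKU₂ hKL hKL'
    by_cases hKbot : K = ⊥
    · exact ⟨0, Fin.elim0, fun α => α.elim0, by simp [hKbot], fun α => α.elim0, fun α => α.elim0⟩
    -- Step A: eigenvalue of L on K
    obtain ⟨lam, v₀, hv₀K, hv₀ne, hv₀⟩ := exists_eigen_on L K hKbot hKL
    -- the eigenspace inside K
    set E : Submodule ℂ V := K ⊓ LinearMap.ker (L - lam • LinearMap.id) with hE
    have hmemE : ∀ x, x ∈ E ↔ x ∈ K ∧ L x = lam • x := by
      intro x
      simp [hE, LinearMap.mem_ker, sub_eq_zero]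
    have hEbot : E ≠ ⊥ := by
      rw [Submodule.ne_bot_iff]
      exact ⟨v₀, (hmemE v₀).mpr ⟨hv₀K, hv₀⟩, hv₀ne⟩
    have hEU₁ : ∀ x ∈ E, U₁ x ∈ E := by
      intro x hx
      obtain ⟨hxK, hxL⟩ := (hmemE x).mp hx
      exact (hmemE _).mpr ⟨hKU₁ x hxK, by rw [hLU₁', hxL, map_smul]⟩
    have hEU₂ : ∀ x ∈ E, U₂ x ∈ E := by
      intro x hx
      obtain ⟨hxK, hxL⟩ := (hmemE x).mp hx
      exact (hmemE _).mpr ⟨hKU₂ x hxK, by rw [hLU₂', hxL, map_smul]⟩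
    -- Step B: eigenvalue of C := U₁U₂ + U₂U₁ on E
    set C : V →ₗ[ℂ] V := U₁ ∘ₗ U₂ + U₂ ∘ₗ U₁ with hC
    have hCapp : ∀ x, C x = U₁ (U₂ x) + U₂ (U₁ x) := fun x => rfl
    have hECmem : ∀ x ∈ E, C x ∈ E := by
      intro x hx
      rw [hCapp]
      exact Submodule.add_mem E (hEU₁ _ (hEU₂ x hx)) (hEU₂ _ (hEU₁ x hx))
    obtain ⟨c, w, hwE, hwne, hwC⟩ := exists_eigen_on C E hEbot hECmem
    set F : Submodule ℂ V := E ⊓ LinearMap.ker (C - c • LinearMap.id) with hF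
    have hmemF : ∀ x, x ∈ F ↔ x ∈ E ∧ C x = c • x := by
      intro x
      simp [hF, LinearMap.mem_ker, sub_eq_zero]
    have hFbot : F ≠ ⊥ := by
      rw [Submodule.ne_bot_iff]
      exact ⟨w, (hmemF w).mpr ⟨hwE, hwC⟩, hwne⟩
    have hCU₁ : ∀ x, C (U₁ x) = U₁ (C x) := by
      intro x
      rw [hCapp, hCapp]
      simp only [map_add, hU₁u']
      rw [add_comm]
    have hFU₁ : ∀ x ∈ F, U₁ x ∈ F := by
      intro x hx
      obtain ⟨hxE, hxC⟩ := (hmemF x).mp hx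
      exact (hmemF _).mpr ⟨hEU₁ x hxE, by rw [hCU₁, hxC, map_smul]⟩
    -- Step C: eigenvector of U₁ on F
    obtain ⟨μ, v, hvF, hvne, hvU₁⟩ := exists_eigen_on U₁ F hFbot hFU₁
    obtain ⟨hvE, hvC⟩ := (hmemF v).mp hvF
    obtain ⟨hvK, hvL⟩ := (hmemE v).mp hvE
    have hU₂vE : U₂ v ∈ E := hEU₂ v hvE
    obtain ⟨hU₂vK, hU₂vL⟩ := (hmemE (U₂ v)).mp hU₂vE
    have hU₂vne : U₂ v ≠ 0 := by
      intro h
      apply hvne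
      rw [← hU₂u' v, h, map_zero]
    -- W := span {v, U₂ v}
    set W : Submodule ℂ V := Submodule.span ℂ {v, U₂ v} with hW
    have hvmemW : v ∈ W := Submodule.subset_span (by simp)
    have hU₂vmemW : U₂ v ∈ W := Submodule.subset_span (by simp)
    have hWK : W ≤ K := by
      rw [hW, Submodule.span_le]
      rintro x (rfl | rfl)
      · exact hvK
      · exact hU₂vK
    -- key computation : U₁ (U₂ v) = c • v - μ • U₂ v
    have hU₁U₂v : U₁ (U₂ v) = c • v - μ • U₂ v := by
      have := hvC
      rw [hCapp, hvU₁, map_smul] at this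
      linear_combination (norm := module) this
    -- invariance of W
    have hWinv : ∀ (A : V →ₗ[ℂ] V), (A v ∈ W) → (A (U₂ v) ∈ W) → ∀ x ∈ W, A x ∈ W := by
      intro A h1 h2 x hx
      have hm : Submodule.map A W ≤ W := by
        rw [hW, Submodule.map_span_le]
        rintro m (rfl | rfl)
        · exact h1
        · exact h2
      exact hm ⟨x, hx, rfl⟩
    have hWU₁ : ∀ x ∈ W, U₁ x ∈ W := by
      apply hWinv
      · rw [hvU₁]; exact Submodule.smul_mem W μ hvmemW
      · rw [hU₁U₂v]
        exact Submodule.sub_mem W (Submodule.smul_mem W c hvmemW)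
          (Submodule.smul_mem W μ hU₂vmemW)
    have hWU₂ : ∀ x ∈ W, U₂ x ∈ W := by
      apply hWinv
      · exact hU₂vmemW
      · rw [hU₂u']; exact hvmemW
    have hWL : ∀ x ∈ W, L x ∈ W := by
      apply hWinv
      · rw [hvL]; exact Submodule.smul_mem W lam hvmemW
      · rw [hU₂vL]; exact Submodule.smul_mem W lam hU₂vmemW
    have hWL' : ∀ x ∈ W, LinearMap.adjoint L x ∈ W := by
      apply hWinv
      · rw [hker lam v hvL]; exact Submodule.smul_mem W _ hvmemW
      · rw [hker lam (U₂ v) hU₂vL]; exact Submodule.smul_mem W _ hU₂vmemW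
    -- dimension of W
    have hWrank : finrank ℂ W ≤ 2 := by
      have h1 : W = (ℂ ∙ v) ⊔ (ℂ ∙ (U₂ v)) := by
        rw [hW, Submodule.span_insert]
      have h2 := Submodule.finrank_sup_add_finrank_inf_eq (ℂ ∙ v) (ℂ ∙ (U₂ v))
      rw [finrank_span_singleton hvne, finrank_span_singleton hU₂vne] at h2
      rw [h1]
      omega
    have hWpos : 1 ≤ finrank ℂ W := by
      have : (ℂ ∙ v) ≤ W := by
        rw [Submodule.span_le]; simpa using hvmemW
      have h2 := Submodule.finrank_mono this
      rwa [finrank_span_singleton hvne] at h2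
    -- K' := K ⊓ Wᗮ
    set K' : Submodule ℂ V := K ⊓ Wᗮ with hK'
    have hK'rank : finrank ℂ K' ≤ n := by
      have h1 := Submodule.finrank_add_inf_finrank_orthogonal hWK
      have h2 : Wᗮ ⊓ K = K' := by rw [hK', inf_comm]
      rw [h2] at h1
      omega
    -- invariance of K'
    have hK'inv : ∀ (A : V →ₗ[ℂ] V), (∀ x ∈ K, A x ∈ K) →
        (∀ u ∈ W, LinearMap.adjoint A u ∈ W) → ∀ x ∈ K', A x ∈ K' := by
      intro A hAK hAW x hx
      rw [hK', Submodule.mem_inf] at hx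
      obtain ⟨hxK, hxW⟩ := hx
      rw [hK', Submodule.mem_inf]
      refine ⟨hAK x hxK, ?_⟩
      rw [Submodule.mem_orthogonal]
      intro u hu
      rw [← LinearMap.adjoint_inner_left]
      exact (Submodule.mem_orthogonal W x).mp hxW _ (hAW u hu)
    have hK'U₁ : ∀ x ∈ K', U₁ x ∈ K' := hK'inv U₁ hKU₁ (by rw [hU₁sa]; exact hWU₁)
    have hK'U₂ : ∀ x ∈ K', U₂ x ∈ K' := hK'inv U₂ hKU₂ (by rw [hU₂sa]; exact hWU₂)
    have hK'L : ∀ x ∈ K', L x ∈ K' := hK'inv L hKL hWL'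
    have hK'L' : ∀ x ∈ K', LinearMap.adjoint L x ∈ K' :=
      hK'inv (LinearMap.adjoint L) hKL' (by rw [LinearMap.adjoint_adjoint]; exact hWL)
    -- apply IH
    obtain ⟨k, H', horth', hsup', hrank', hinv'⟩ := IH K' hK'rank hK'U₁ hK'U₂ hK'L hK'L'
    have hH'le : ∀ α, H' α ≤ K' := fun α => hsup' ▸ le_iSup H' α
    have hH'leW : ∀ α, H' α ≤ Wᗮ := fun α => le_trans (hH'le α) inf_le_right
    -- assemble
    refine ⟨k + 1, Fin.cons W H', ?_, ?_, ?_, ?_⟩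
    · -- orthogonality
      intro α β
      refine Fin.cases ?_ ?_ α
      · refine Fin.cases ?_ ?_ β
        · intro hab; exact absurd rfl hab
        · intro j hab x hx y hy
          simp only [Fin.cons_zero] at hx
          simp only [Fin.cons_succ] at hy
          exact (Submodule.mem_orthogonal W y).mp (hH'leW j hy) x hx
      · intro i
        refine Fin.cases ?_ ?_ β
        · intro hab x hx y hy
          simp only [Fin.cons_succ] at hx
          simp only [Fin.cons_zero] at hy
          rw [inner_eq_zero_symm]
          exact (Submodule.mem_orthogonal W x).mp (hH'leW i hx) y hy
        · intro j hab x hx y hy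
          simp only [Fin.cons_succ] at hx hy
          refine horth' i j ?_ x hx y hy
          intro h; exact hab (by rw [h])
    · -- sup
      have hsplit : (⨆ α, Fin.cons W H' α) = W ⊔ ⨆ j, H' j := by
        apply le_antisymm
        · apply iSup_le
          intro α
          refine Fin.cases ?_ ?_ α
          · rw [Fin.cons_zero]; exact le_sup_left
          · intro i
            rw [Fin.cons_succ]
            exact le_trans (le_iSup H' i) le_sup_right
        · apply sup_le
          · exact le_iSup_of_le 0 (by rw [Fin.cons_zero])
          · apply iSup_le
            intro j
            exact le_iSup_of_le j.succ (by rw [Fin.cons_succ])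
      rw [hsplit, hsup']
      -- W ⊔ K' = K
      apply le_antisymm
      · exact sup_le hWK inf_le_left
      · intro x hxK
        have htop : W ⊔ Wᗮ = ⊤ := Submodule.sup_orthogonal_of_hasOrthogonalProjection
        have : x ∈ W ⊔ Wᗮ := htop ▸ Submodule.mem_top
        obtain ⟨a, ha, b, hb, rfl⟩ := Submodule.mem_sup.mp this
        refine Submodule.mem_sup.mpr ⟨a, ha, b, ⟨?_, hb⟩, rfl⟩
        have : a ∈ K := hWK ha
        simpa using Submodule.sub_mem K hxK this
    · -- rank
      intro α
      refine Fin.cases ?_ ?_ α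
      · exact hWrank
      · intro i; exact hrank' i
    · -- invariance
      intro α
      refine Fin.cases ?_ ?_ α
      · intro ψ hψ
        simp only [Fin.cons_zero] at hψ ⊢
        exact ⟨hWU₁ ψ hψ, hWU₂ ψ hψ, hWL ψ hψ⟩
      · intro i ψ hψ
        simp only [Fin.cons_succ] at hψ ⊢
        exact hinv' i ψ hψ

/-- **Jordan's lemma extension.** Let `V` be a finite-dimensional complex inner product
space, `U₁, U₂` self-adjoint unitary operators on `V`, and `L` a normal operator with
`[L, U₁] = [L, U₂] = 0`. Then `V` decomposes as an internal direct sum of pairwise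
orthogonal subspaces `H α`, each of dimension at most `2`, each invariant under
`U₁`, `U₂` and `L`. -/
theorem jordan_lemma_extension {V : Type} [NormedAddCommGroup V]
    [InnerProductSpace ℂ V] [FiniteDimensional ℂ V]
    (U₁ U₂ L : V →ₗ[ℂ] V)
    (hU₁sa : LinearMap.adjoint U₁ = U₁) (hU₁u : U₁ ∘ₗ U₁ = LinearMap.id)
    (hU₂sa : LinearMap.adjoint U₂ = U₂) (hU₂u : U₂ ∘ₗ U₂ = LinearMap.id)
    (hLnorm : LinearMap.adjoint L ∘ₗ L = L ∘ₗ LinearMap.adjoint L)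
    (hLU₁ : L ∘ₗ U₁ = U₁ ∘ₗ L) (hLU₂ : L ∘ₗ U₂ = U₂ ∘ₗ L) :
    ∃ (k : ℕ) (H : Fin k → Submodule ℂ V),
      (∀ α β, α ≠ β → ∀ x ∈ H α, ∀ y ∈ H β, (inner ℂ x y : ℂ) = 0) ∧
      (⨆ α, H α) = ⊤ ∧
      (∀ α, Module.finrank ℂ (H α) ≤ 2) ∧
      (∀ α, ∀ ψ ∈ H α, U₁ ψ ∈ H α ∧ U₂ ψ ∈ H α ∧ L ψ ∈ H α) := by
  obtain ⟨k, H, h1, h2, h3, h4⟩ := jordan_key U₁ U₂ L hU₁sa hU₁u hU₂sa hU₂u hLnorm hLU₁ hLU₂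
    (finrank ℂ V) ⊤ (by rw [finrank_top]) (fun x _ => trivial) (fun x _ => trivial)
    (fun x _ => trivial) (fun x _ => trivial)
  exact ⟨k, H, h1, h2, h3, h4⟩
end

section
/- Let V be a finite-dimensional complex inner product space and let Π, M, K be orthogonal (Hermitian) projections on V such that [K, Π] = [K, M] = 0. Then there exists a finite family (H_α) of pairwise orthogonal subspaces of V whose internal direct sum equals V, such that dim H_α ≤ 2 for every α, each H_α is invariant under Π, M and K, and for every α with dim H_α = 2 there exist an orthonormal basis (e, f) of H_α and an angle θ_α ∈ ℝ such that Πe = e, Πf = 0, Me = cos²(θ_α)·e + cos(θ_α)sin(θ_α)·f and Mf = cos(θ_α)sin(θ_α)·e + sin²(θ_α)·f. -/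
open Module LinearMap

set_option linter.unusedSectionVars false
set_option linter.unusedVariables false

local notation "⟪" x ", " y "⟫" => @inner ℂ _ _ x y

section Helpers

variable {V : Type} [NormedAddCommGroup V] [InnerProductSpace ℂ V] [FiniteDimensional ℂ V]

lemma orth_invariant (T : V →ₗ[ℂ] V) (hT : LinearMap.adjoint T = T)
    (W : Submodule ℂ V) (hW : ∀ x ∈ W, T x ∈ W) :
    ∀ x ∈ Wᗮ, T x ∈ Wᗮ := by
  intro x hx
  rw [Submodule.mem_orthogonal] at hx ⊢
  intro u hu
  calc (⟪u, T x⟫ : ℂ) = ⟪LinearMap.adjoint T u, x⟫ := by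
        rw [LinearMap.adjoint_inner_left]
    _ = ⟪T u, x⟫ := by rw [hT]
    _ = 0 := hx (T u) (hW u hu)

lemma adjoint_restrict (T : V →ₗ[ℂ] V) (hT : LinearMap.adjoint T = T)
    (W : Submodule ℂ V) (h : ∀ x ∈ W, T x ∈ W) :
    LinearMap.adjoint (T.restrict h) = T.restrict h := by
  symm
  rw [LinearMap.eq_adjoint_iff]
  intro x y
  simp only [Submodule.coe_inner, LinearMap.restrict_coe_apply]
  calc (⟪T (x : V), (y : V)⟫ : ℂ) = ⟪LinearMap.adjoint T (x : V), (y : V)⟫ := by rw [hT]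
    _ = ⟪(x : V), T (y : V)⟫ := by rw [LinearMap.adjoint_inner_left]

lemma span_inv (T : V →ₗ[ℂ] V) (s : Set V) (h : ∀ x ∈ s, T x ∈ Submodule.span ℂ s) :
    ∀ x ∈ Submodule.span ℂ s, T x ∈ Submodule.span ℂ s := fun x hx =>
  (Submodule.span_le.2 h : Submodule.span ℂ s ≤ Submodule.comap T (Submodule.span ℂ s)) hx

/-- The key step: find an invariant block of dimension 1 or 2 with the right normal form. -/
lemma exists_block (hV : Nontrivial V)
    (P M K : V →ₗ[ℂ] V)
    (hPsa : LinearMap.adjoint P = P) (hPproj : P ∘ₗ P = P)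
    (hMsa : LinearMap.adjoint M = M) (hMproj : M ∘ₗ M = M)
    (hKproj : K ∘ₗ K = K)
    (hKP : K ∘ₗ P = P ∘ₗ K) (hKM : K ∘ₗ M = M ∘ₗ K) :
    ∃ W : Submodule ℂ V, W ≠ ⊥ ∧ Module.finrank ℂ W ≤ 2 ∧
      (∀ ψ ∈ W, P ψ ∈ W ∧ M ψ ∈ W ∧ K ψ ∈ W) ∧
      (Module.finrank ℂ W = 2 →
        ∃ (e f : V) (θ : ℝ),
          e ∈ W ∧ f ∈ W ∧ ‖e‖ = 1 ∧ ‖f‖ = 1 ∧ (inner ℂ e f : ℂ) = 0 ∧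
          P e = e ∧ P f = 0 ∧
          M e = ((Real.cos θ : ℂ) ^ 2) • e + ((Real.cos θ : ℂ) * (Real.sin θ : ℂ)) • f ∧
          M f = ((Real.cos θ : ℂ) * (Real.sin θ : ℂ)) • e + ((Real.sin θ : ℂ) ^ 2) • f) := by
  have hPP : ∀ x : V, P (P x) = P x := fun x => by
    simpa using LinearMap.ext_iff.mp hPproj x
  have hMM : ∀ x : V, M (M x) = M x := fun x => by
    simpa using LinearMap.ext_iff.mp hMproj x
  have hKPx : ∀ x : V, K (P x) = P (K x) := fun x => by
    simpa using LinearMap.ext_iff.mp hKP x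
  have hKMx : ∀ x : V, K (M x) = M (K x) := fun x => by
    simpa using LinearMap.ext_iff.mp hKM x
  have hPinner : ∀ x y : V, (⟪P x, y⟫ : ℂ) = ⟪x, P y⟫ := fun x y => by
    rw [← hPsa, LinearMap.adjoint_inner_left, hPsa]
  have hMinner : ∀ x y : V, (⟪M x, y⟫ : ℂ) = ⟪x, M y⟫ := fun x y => by
    rw [← hMsa, LinearMap.adjoint_inner_left, hMsa]
  -- Step 1: a nonzero eigenspace E of K, invariant under P and M.
  obtain ⟨E, c, hEne, hEP, hEM, hEK⟩ :
      ∃ (E : Submodule ℂ V) (c : ℂ), E ≠ ⊥ ∧ (∀ x ∈ E, P x ∈ E) ∧ (∀ x ∈ E, M x ∈ E) ∧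
        (∀ x ∈ E, K x = c • x) := by
    by_cases hker : LinearMap.ker K = ⊥
    · have hinj := LinearMap.ker_eq_bot.mp hker
      have hKid : ∀ x : V, K x = x := fun x =>
        hinj (by simpa using LinearMap.ext_iff.mp hKproj x)
      refine ⟨⊤, 1, ?_, fun x _ => trivial, fun x _ => trivial, fun x _ => by simp [hKid]⟩
      intro h
      obtain ⟨a, b, hab⟩ := hV
      refine hab ?_
      have ha : a ∈ (⊥ : Submodule ℂ V) := h ▸ Submodule.mem_top
      have hb : b ∈ (⊥ : Submodule ℂ V) := h ▸ Submodule.mem_top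
      rw [Submodule.mem_bot] at ha hb
      rw [ha, hb]
    · refine ⟨LinearMap.ker K, 0, hker, ?_, ?_, ?_⟩
      · intro x hx
        rw [LinearMap.mem_ker] at hx ⊢
        rw [hKPx, hx, map_zero]
      · intro x hx
        rw [LinearMap.mem_ker] at hx ⊢
        rw [hKMx, hx, map_zero]
      · intro x hx
        rw [LinearMap.mem_ker] at hx
        simp [hx]
  haveI : Nontrivial E := Submodule.nontrivial_iff_ne_bot.mpr hEne
  -- Step 2: the fixed space of P inside E.
  obtain ⟨F, hFdef⟩ : ∃ F : Submodule ℂ V, F = E ⊓ LinearMap.ker (P - LinearMap.id) := ⟨_, rfl⟩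
  have memF : ∀ x : V, x ∈ F ↔ x ∈ E ∧ P x = x := by
    intro x
    simp [hFdef, Submodule.mem_inf, LinearMap.mem_ker, sub_eq_zero, LinearMap.sub_apply]
  by_cases hF : F = ⊥
  · -- P vanishes on E; take an eigenvector of M|E.
    have hPE : ∀ x ∈ E, P x = 0 := by
      intro x hx
      have h1 : P x ∈ F := (memF (P x)).mpr ⟨hEP x hx, hPP x⟩
      rw [hF, Submodule.mem_bot] at h1
      exact h1
    have hME : ∀ x ∈ E, M x ∈ E := hEM
    obtain ⟨μ, hμ⟩ := Module.End.exists_eigenvalue (M.restrict hME)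
    obtain ⟨w, hw⟩ := hμ.exists_hasEigenvector
    have hv0 : (w : V) ≠ 0 := fun h => hw.2 (Subtype.ext h)
    have hMv : M (w : V) = μ • (w : V) := by
      have h := hw.apply_eq_smul
      calc M (w : V) = ((M.restrict hME) w : V) := rfl
        _ = μ • (w : V) := by rw [h]; rfl
    refine ⟨Submodule.span ℂ {(w : V)}, ?_, ?_, ?_, ?_⟩
    · simpa [Submodule.span_singleton_eq_bot] using hv0
    · rw [finrank_span_singleton hv0]; omega
    · intro ψ hψ
      have hmem : (w : V) ∈ Submodule.span ℂ {(w : V)} := Submodule.subset_span rfl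
      refine ⟨span_inv P _ ?_ ψ hψ, span_inv M _ ?_ ψ hψ, span_inv K _ ?_ ψ hψ⟩
      · rintro x rfl
        rw [hPE _ w.2]; exact Submodule.zero_mem _
      · rintro x rfl
        rw [hMv]; exact Submodule.smul_mem _ _ hmem
      · rintro x rfl
        rw [hEK _ w.2]; exact Submodule.smul_mem _ _ hmem
    · intro h2
      rw [finrank_span_singleton hv0] at h2
      omega
  · -- F ≠ ⊥; take an eigenvector of (P∘M∘P)|F.
    haveI : Nontrivial F := Submodule.nontrivial_iff_ne_bot.mpr hF
    have hFE : F ≤ E := hFdef ▸ inf_le_left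
    have hAF : ∀ x ∈ F, (P ∘ₗ M ∘ₗ P) x ∈ F := by
      intro x hx
      obtain ⟨hxE, hxP⟩ := (memF x).mp hx
      refine (memF _).mpr ⟨?_, ?_⟩
      · simp only [LinearMap.comp_apply]
        exact hEP _ (hEM _ (hEP _ hxE))
      · simp only [LinearMap.comp_apply]
        exact hPP _
    obtain ⟨μ, hμ⟩ := Module.End.exists_eigenvalue ((P ∘ₗ M ∘ₗ P).restrict hAF)
    obtain ⟨w, hw⟩ := hμ.exists_hasEigenvector
    have hw0 : (w : V) ≠ 0 := fun h => hw.2 (Subtype.ext h)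
    have hAw : P (M (P (w : V))) = μ • (w : V) := by
      have h := hw.apply_eq_smul
      calc P (M (P (w : V))) = (((P ∘ₗ M ∘ₗ P).restrict hAF) w : V) := rfl
        _ = μ • (w : V) := by rw [h]; rfl
    obtain ⟨v, hvF, hv1, hAv⟩ :
        ∃ v : V, v ∈ F ∧ ‖v‖ = 1 ∧ P (M (P v)) = μ • v := by
      refine ⟨((‖(w : V)‖ : ℝ) : ℂ)⁻¹ • (w : V), Submodule.smul_mem _ _ w.2,
        norm_smul_inv_norm hw0, ?_⟩
      rw [map_smul, map_smul, map_smul, hAw, smul_comm]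
    have hvE : v ∈ E := hFE hvF
    have hPv : P v = v := ((memF v).mp hvF).2
    have hKv : K v = c • v := hEK v hvE
    have hvv : (⟪v, v⟫ : ℂ) = 1 := by
      rw [inner_self_eq_norm_sq_to_K, hv1]; norm_num
    have hv0 : v ≠ 0 := fun h => by rw [h, norm_zero] at hv1; norm_num at hv1
    have hPMv' : P (M v) = μ • v := by rw [← hAv, hPv]
    obtain ⟨r, hrdef⟩ : ∃ r : ℝ, r = ‖M v‖ ^ 2 := ⟨_, rfl⟩
    have hr0 : (0 : ℝ) ≤ r := by rw [hrdef]; positivity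
    have hvMv : (⟪v, M v⟫ : ℂ) = μ := by
      calc (⟪v, M v⟫ : ℂ) = ⟪P v, M v⟫ := by rw [hPv]
        _ = ⟪v, P (M v)⟫ := hPinner v (M v)
        _ = ⟪v, μ • v⟫ := by rw [hPMv']
        _ = μ * ⟪v, v⟫ := inner_smul_right _ _ _
        _ = μ := by rw [hvv, mul_one]
    have hvMv' : (⟪v, M v⟫ : ℂ) = (r : ℂ) := by
      calc (⟪v, M v⟫ : ℂ) = ⟪v, M (M v)⟫ := by rw [hMM]
        _ = ⟪M v, M v⟫ := (hMinner v (M v)).symm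
        _ = (r : ℂ) := by rw [inner_self_eq_norm_sq_to_K, hrdef]; norm_cast
    have hμr : μ = (r : ℂ) := by rw [← hvMv, hvMv']
    have hPMv : P (M v) = (r : ℂ) • v := by rw [hPMv', hμr]
    have hMvv : (⟪M v, v⟫ : ℂ) = (r : ℂ) := by
      rw [← inner_conj_symm, hvMv, hμr, Complex.conj_ofReal]
    have hMvMv : (⟪M v, M v⟫ : ℂ) = (r : ℂ) := by
      rw [inner_self_eq_norm_sq_to_K, hrdef]; norm_cast
    obtain ⟨g, hgdef⟩ : ∃ g : V, g = M v - (r : ℂ) • v := ⟨_, rfl⟩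
    have hvg : (⟪v, g⟫ : ℂ) = 0 := by
      rw [hgdef, inner_sub_right, inner_smul_right, hvMv, hμr, hvv, mul_one, sub_self]
    have hgg : (⟪g, g⟫ : ℂ) = ((r - r ^ 2 : ℝ) : ℂ) := by
      rw [hgdef]
      simp only [inner_sub_left, inner_sub_right, inner_smul_left, inner_smul_right,
        hvMv, hμr, hMvv, hMvMv, hvv, Complex.conj_ofReal]
      push_cast; ring
    have hgn : ‖g‖ ^ 2 = r - r ^ 2 := by
      rw [inner_self_eq_norm_sq_to_K] at hgg
      norm_cast at hgg
      exact Complex.ofReal_inj.mp hgg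
    have hr1 : r ≤ 1 := by nlinarith [sq_nonneg ‖g‖, hgn, hr0]
    have hPg : P g = 0 := by
      rw [hgdef, map_sub, map_smul, hPMv, hPv, sub_self]
    have hKg : K g = c • g := by
      rw [hgdef, map_sub, map_smul, hKMx, hKv, map_smul, smul_sub, smul_smul, smul_smul,
        mul_comm c]
    have hMg : M g = (1 - (r : ℂ)) • M v := by
      rw [hgdef, map_sub, map_smul, hMM, sub_smul, one_smul]
    by_cases hg : g = 0
    · -- one-dimensional block spanned by v
      rw [hgdef, sub_eq_zero] at hg
      refine ⟨Submodule.span ℂ {v}, ?_, ?_, ?_, ?_⟩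
      · simpa [Submodule.span_singleton_eq_bot] using hv0
      · rw [finrank_span_singleton hv0]; omega
      · intro ψ hψ
        have hmem : v ∈ Submodule.span ℂ {v} := Submodule.subset_span rfl
        refine ⟨span_inv P _ ?_ ψ hψ, span_inv M _ ?_ ψ hψ, span_inv K _ ?_ ψ hψ⟩
        · rintro x rfl; rw [hPv]; exact hmem
        · rintro x rfl; rw [hg]; exact Submodule.smul_mem _ _ hmem
        · rintro x rfl; rw [hKv]; exact Submodule.smul_mem _ _ hmem
      · intro h2
        rw [finrank_span_singleton hv0] at h2
        omega
    · -- two-dimensional block spanned by v and g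
      have hgnorm0 : ‖g‖ ≠ 0 := fun h => hg (norm_eq_zero.mp h)
      have hgnormC0 : ((‖g‖ : ℝ) : ℂ) ≠ 0 := by exact_mod_cast hgnorm0
      obtain ⟨f, hfdef⟩ : ∃ f : V, f = ((‖g‖ : ℝ) : ℂ)⁻¹ • g := ⟨_, rfl⟩
      have hgf : g = ((‖g‖ : ℝ) : ℂ) • f := by
        rw [hfdef, smul_inv_smul₀ hgnormC0]
      have hf1 : ‖f‖ = 1 := by rw [hfdef]; exact norm_smul_inv_norm hg
      obtain ⟨θ, hθdef⟩ : ∃ θ : ℝ, θ = Real.arccos (Real.sqrt r) := ⟨_, rfl⟩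
      have hsq1 : Real.sqrt r ≤ 1 := by
        rw [show (1 : ℝ) = Real.sqrt 1 by simp]
        exact Real.sqrt_le_sqrt hr1
      have hcos : Real.cos θ = Real.sqrt r := by
        rw [hθdef]
        exact Real.cos_arccos (le_trans (by norm_num) (Real.sqrt_nonneg r)) hsq1
      have hsin : Real.sin θ = Real.sqrt (1 - r) := by
        rw [hθdef, Real.sin_arccos, Real.sq_sqrt hr0]
      have hcos2 : Real.cos θ ^ 2 = r := by rw [hcos, Real.sq_sqrt hr0]
      have hsin2 : Real.sin θ ^ 2 = 1 - r := by
        rw [hsin, Real.sq_sqrt (by linarith)]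
      have hcs : Real.cos θ * Real.sin θ = ‖g‖ := by
        rw [hcos, hsin, ← Real.sqrt_mul hr0, show r * (1 - r) = r - r ^ 2 by ring, ← hgn,
          Real.sqrt_sq (norm_nonneg g)]
      -- scalar identities over ℂ
      have hc2C : ((Real.cos θ : ℂ)) ^ 2 = (r : ℂ) := by
        exact_mod_cast congrArg (Complex.ofReal) hcos2
      have hcsC : (Real.cos θ : ℂ) * (Real.sin θ : ℂ) = ((‖g‖ : ℝ) : ℂ) := by
        exact_mod_cast congrArg (Complex.ofReal) hcs
      have hs2C : ((Real.sin θ : ℂ)) ^ 2 = 1 - (r : ℂ) := by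
        have h : ((Real.sin θ ^ 2 : ℝ) : ℂ) = ((1 - r : ℝ) : ℂ) :=
          congrArg (Complex.ofReal) hsin2
        push_cast at h
        exact_mod_cast h
      have hCkey : ((1 : ℂ) - (r : ℂ)) * (r : ℂ) = ((‖g‖ : ℝ) : ℂ) * ((‖g‖ : ℝ) : ℂ) := by
        have hRkey : (1 - r) * r = ‖g‖ * ‖g‖ := by
          rw [show (1 - r) * r = r - r ^ 2 by ring, ← hgn, sq]
        exact_mod_cast congrArg (Complex.ofReal) hRkey
      have q1C : (((‖g‖ : ℝ) : ℂ))⁻¹ * ((1 - (r : ℂ)) * (r : ℂ))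
          = (Real.cos θ : ℂ) * (Real.sin θ : ℂ) := by
        rw [hcsC, hCkey, ← mul_assoc, inv_mul_cancel₀ hgnormC0, one_mul]
      have q2C : (((‖g‖ : ℝ) : ℂ))⁻¹ * ((1 - (r : ℂ)) * ((‖g‖ : ℝ) : ℂ))
          = ((Real.sin θ : ℂ)) ^ 2 := by
        rw [hs2C, mul_comm (1 - (r : ℂ)), ← mul_assoc, inv_mul_cancel₀ hgnormC0, one_mul]
      have hMeq : M v = (r : ℂ) • v + ((‖g‖ : ℝ) : ℂ) • f := by
        rw [← hgf, hgdef]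
        abel
      -- linear independence and rank
      have hli : LinearIndependent ℂ ![v, g] := by
        rw [LinearIndependent.pair_iff' hv0]
        intro a ha
        apply hg
        have h : (⟪v, g⟫ : ℂ) = a := by
          rw [← ha, inner_smul_right, hvv, mul_one]
        rw [← ha, ← h, hvg, zero_smul]
      have hrange : Set.range ![v, g] = {v, g} := by
        ext x
        simp [Matrix.range_cons, Matrix.range_empty, or_comm]
      have hrank : Module.finrank ℂ (Submodule.span ℂ ({v, g} : Set V)) = 2 := by
        rw [← hrange, finrank_span_eq_card hli]
        simp
      have hvW : v ∈ Submodule.span ℂ ({v, g} : Set V) :=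
        Submodule.subset_span (Set.mem_insert _ _)
      have hgW : g ∈ Submodule.span ℂ ({v, g} : Set V) :=
        Submodule.subset_span (Set.mem_insert_of_mem _ rfl)
      have hfW : f ∈ Submodule.span ℂ ({v, g} : Set V) := by
        rw [hfdef]; exact Submodule.smul_mem _ _ hgW
      have hMvW : M v ∈ Submodule.span ℂ ({v, g} : Set V) := by
        rw [hMeq]
        exact Submodule.add_mem _ (Submodule.smul_mem _ _ hvW)
          (Submodule.smul_mem _ _ hfW)
      refine ⟨Submodule.span ℂ ({v, g} : Set V), ?_, le_of_eq hrank, ?_,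
        fun _ => ⟨v, f, θ, hvW, hfW, hv1, hf1, ?_, hPv, ?_, ?_, ?_⟩⟩
      · intro h
        rw [h, Submodule.mem_bot] at hvW
        exact hv0 hvW
      · intro ψ hψ
        refine ⟨span_inv P _ ?_ ψ hψ, span_inv M _ ?_ ψ hψ, span_inv K _ ?_ ψ hψ⟩
        · rintro x (rfl | rfl)
          · rw [hPv]; exact hvW
          · rw [hPg]; exact Submodule.zero_mem _
        · rintro x (rfl | rfl)
          · exact hMvW
          · rw [hMg]; exact Submodule.smul_mem _ _ hMvW
        · rintro x (rfl | rfl)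
          · rw [hKv]; exact Submodule.smul_mem _ _ hvW
          · rw [hKg]; exact Submodule.smul_mem _ _ hgW
      · -- inner v f = 0
        rw [hfdef, inner_smul_right, hvg, mul_zero]
      · -- P f = 0
        rw [hfdef, map_smul, hPg, smul_zero]
      · -- M e in the basis
        rw [hc2C, hcsC]
        exact hMeq
      · -- M f in the basis
        calc M f = (((‖g‖ : ℝ) : ℂ))⁻¹ • ((1 - (r : ℂ)) • M v) := by
              rw [hfdef, map_smul, hMg]
          _ = (((‖g‖ : ℝ) : ℂ))⁻¹ • ((1 - (r : ℂ)) • ((r : ℂ) • v + ((‖g‖ : ℝ) : ℂ) • f)) := by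
              rw [hMeq]
          _ = ((((‖g‖ : ℝ) : ℂ))⁻¹ * ((1 - (r : ℂ)) * (r : ℂ))) • v
              + ((((‖g‖ : ℝ) : ℂ))⁻¹ * ((1 - (r : ℂ)) * ((‖g‖ : ℝ) : ℂ))) • f := by
              simp only [smul_add, smul_smul]
          _ = ((Real.cos θ : ℂ) * (Real.sin θ : ℂ)) • v + ((Real.sin θ : ℂ) ^ 2) • f := by
              rw [q1C, q2C]

end Helpers

theorem jordan_aux (n : ℕ) :
    ∀ (V : Type) [NormedAddCommGroup V] [InnerProductSpace ℂ V] [FiniteDimensional ℂ V]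
      (P M K : V →ₗ[ℂ] V), Module.finrank ℂ V = n →
      LinearMap.adjoint P = P → P ∘ₗ P = P →
      LinearMap.adjoint M = M → M ∘ₗ M = M →
      LinearMap.adjoint K = K → K ∘ₗ K = K →
      K ∘ₗ P = P ∘ₗ K → K ∘ₗ M = M ∘ₗ K →
      ∃ (k : ℕ) (H : Fin k → Submodule ℂ V),
        (∀ α β, α ≠ β → ∀ x ∈ H α, ∀ y ∈ H β, (inner ℂ x y : ℂ) = 0) ∧
        (⨆ α, H α) = ⊤ ∧
        (∀ α, Module.finrank ℂ (H α) ≤ 2) ∧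
        (∀ α, ∀ ψ ∈ H α, P ψ ∈ H α ∧ M ψ ∈ H α ∧ K ψ ∈ H α) ∧
        (∀ α, Module.finrank ℂ (H α) = 2 →
          ∃ (e f : V) (θ : ℝ),
            e ∈ H α ∧ f ∈ H α ∧ ‖e‖ = 1 ∧ ‖f‖ = 1 ∧ (inner ℂ e f : ℂ) = 0 ∧
            P e = e ∧ P f = 0 ∧
            M e = ((Real.cos θ : ℂ) ^ 2) • e + ((Real.cos θ : ℂ) * (Real.sin θ : ℂ)) • f ∧
            M f = ((Real.cos θ : ℂ) * (Real.sin θ : ℂ)) • e + ((Real.sin θ : ℂ) ^ 2) • f) := by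
  induction n using Nat.strong_induction_on with
  | _ n IH =>
    intro V _ _ _ P M K hn hPsa hPproj hMsa hMproj hKsa hKproj hKP hKM
    rcases Nat.eq_zero_or_pos n with h0 | hpos
    · haveI : Subsingleton V := Module.finrank_zero_iff.mp (by rw [hn, h0])
      refine ⟨0, Fin.elim0, fun α => α.elim0, ?_, fun α => α.elim0, fun α => α.elim0,
        fun α => α.elim0⟩
      rw [Submodule.eq_top_iff']
      intro x
      have hx0 : x = 0 := Subsingleton.elim x 0
      rw [hx0]
      exact Submodule.zero_mem _
    · haveI hVnt : Nontrivial V := by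
        rw [← Module.finrank_pos_iff (R := ℂ), hn]
        exact hpos
      obtain ⟨W, hWne, hWrank, hWinv, hWdim2⟩ :=
        exists_block hVnt P M K hPsa hPproj hMsa hMproj hKproj hKP hKM
      have hPo := orth_invariant P hPsa W (fun x hx => (hWinv x hx).1)
      have hMo := orth_invariant M hMsa W (fun x hx => (hWinv x hx).2.1)
      have hKo := orth_invariant K hKsa W (fun x hx => (hWinv x hx).2.2)
      have hP'sa := adjoint_restrict P hPsa Wᗮ hPo
      have hM'sa := adjoint_restrict M hMsa Wᗮ hMo
      have hK'sa := adjoint_restrict K hKsa Wᗮ hKo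
      have hP'proj : P.restrict hPo ∘ₗ P.restrict hPo = P.restrict hPo := by
        refine LinearMap.ext fun x => Subtype.ext ?_
        simp only [LinearMap.comp_apply, LinearMap.restrict_coe_apply]
        simpa using LinearMap.ext_iff.mp hPproj (x : V)
      have hM'proj : M.restrict hMo ∘ₗ M.restrict hMo = M.restrict hMo := by
        refine LinearMap.ext fun x => Subtype.ext ?_
        simp only [LinearMap.comp_apply, LinearMap.restrict_coe_apply]
        simpa using LinearMap.ext_iff.mp hMproj (x : V)
      have hK'proj : K.restrict hKo ∘ₗ K.restrict hKo = K.restrict hKo := by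
        refine LinearMap.ext fun x => Subtype.ext ?_
        simp only [LinearMap.comp_apply, LinearMap.restrict_coe_apply]
        simpa using LinearMap.ext_iff.mp hKproj (x : V)
      have hK'P' : K.restrict hKo ∘ₗ P.restrict hPo = P.restrict hPo ∘ₗ K.restrict hKo := by
        refine LinearMap.ext fun x => Subtype.ext ?_
        simp only [LinearMap.comp_apply, LinearMap.restrict_coe_apply]
        simpa using LinearMap.ext_iff.mp hKP (x : V)
      have hK'M' : K.restrict hKo ∘ₗ M.restrict hMo = M.restrict hMo ∘ₗ K.restrict hKo := by
        refine LinearMap.ext fun x => Subtype.ext ?_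
        simp only [LinearMap.comp_apply, LinearMap.restrict_coe_apply]
        simpa using LinearMap.ext_iff.mp hKM (x : V)
      have hWpos : 0 < Module.finrank ℂ W :=
        Module.finrank_pos_iff.mpr (Submodule.nontrivial_iff_ne_bot.mpr hWne)
      have hsum := Submodule.finrank_add_finrank_orthogonal W
      have hlt : Module.finrank ℂ Wᗮ < n := by omega
      obtain ⟨k', H', horth', hsup', hrank', hinv', hdim'⟩ :=
        IH (Module.finrank ℂ Wᗮ) hlt ↥Wᗮ (P.restrict hPo) (M.restrict hMo) (K.restrict hKo)
          rfl hP'sa hP'proj hM'sa hM'proj hK'sa hK'proj hK'P' hK'M'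
      refine ⟨k' + 1, Fin.cons W (fun i => (H' i).map Wᗮ.subtype), ?_, ?_, ?_, ?_, ?_⟩
      · -- orthogonality
        intro α β hne
        rcases Fin.eq_zero_or_eq_succ α with rfl | ⟨i, rfl⟩ <;>
          rcases Fin.eq_zero_or_eq_succ β with rfl | ⟨j, rfl⟩
        · exact absurd rfl hne
        · intro x hx y hy
          simp only [Fin.cons_zero] at hx
          simp only [Fin.cons_succ] at hy
          have hyo : y ∈ Wᗮ := Submodule.map_subtype_le Wᗮ (H' j) hy
          exact (Submodule.mem_orthogonal W y).mp hyo x hx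
        · intro x hx y hy
          simp only [Fin.cons_succ] at hx
          simp only [Fin.cons_zero] at hy
          have hxo : x ∈ Wᗮ := Submodule.map_subtype_le Wᗮ (H' i) hx
          exact (Submodule.mem_orthogonal' W x).mp hxo y hy
        · intro x hx y hy
          simp only [Fin.cons_succ] at hx hy
          have hij : i ≠ j := fun h => hne (by rw [h])
          obtain ⟨a, ha, rfl⟩ := hx
          obtain ⟨b, hb, rfl⟩ := hy
          have h := horth' i j hij a ha b hb
          rwa [Submodule.coe_inner] at h
      · -- supremum is everything
        apply le_antisymm le_top
        rw [← Submodule.sup_orthogonal_of_hasOrthogonalProjection (K := W)]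
        refine sup_le ?_ ?_
        · exact le_iSup (Fin.cons W fun i => (H' i).map Wᗮ.subtype) 0
        · have hmap : Wᗮ = ⨆ i, (H' i).map Wᗮ.subtype := by
            rw [← Submodule.map_iSup, hsup', Submodule.map_subtype_top]
          exact le_trans (le_of_eq hmap)
            (iSup_le fun i => le_iSup (Fin.cons W fun j => (H' j).map Wᗮ.subtype) i.succ)
      · -- dimension bound
        intro α
        rcases Fin.eq_zero_or_eq_succ α with rfl | ⟨i, rfl⟩
        · exact hWrank
        · show Module.finrank ℂ ((H' i).map Wᗮ.subtype) ≤ 2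
          rw [Submodule.finrank_map_subtype_eq]
          exact hrank' i
      · -- invariance
        intro α ψ hψ
        rcases Fin.eq_zero_or_eq_succ α with rfl | ⟨i, rfl⟩
        · simp only [Fin.cons_zero] at hψ ⊢
          exact hWinv ψ hψ
        · simp only [Fin.cons_succ] at hψ ⊢
          obtain ⟨a, ha, rfl⟩ := hψ
          obtain ⟨h1, h2, h3⟩ := hinv' i a ha
          exact ⟨⟨_, h1, rfl⟩, ⟨_, h2, rfl⟩, ⟨_, h3, rfl⟩⟩
      · -- two-dimensional blocks
        intro α
        rcases Fin.eq_zero_or_eq_succ α with rfl | ⟨i, rfl⟩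
        · simp only [Fin.cons_zero]
          exact hWdim2
        · intro h2
          simp only [Fin.cons_succ]
          have h2' : Module.finrank ℂ ((H' i).map Wᗮ.subtype) = 2 := h2
          rw [Submodule.finrank_map_subtype_eq] at h2'
          obtain ⟨e, f, θ, he, hf, hne, hnf, hef, hPe, hPf, hMe, hMf⟩ := hdim' i h2'
          refine ⟨(e : V), (f : V), θ, ⟨e, he, rfl⟩, ⟨f, hf, rfl⟩, hne, hnf, ?_, ?_, ?_, ?_, ?_⟩
          · rw [← Submodule.coe_inner]
            exact hef
          · calc P (e : V) = ((P.restrict hPo) e : V) :=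
                  (LinearMap.restrict_coe_apply _ _ _).symm
              _ = (e : V) := by rw [hPe]
          · calc P (f : V) = ((P.restrict hPo) f : V) :=
                  (LinearMap.restrict_coe_apply _ _ _).symm
              _ = 0 := by rw [hPf]; rfl
          · calc M (e : V) = ((M.restrict hMo) e : V) :=
                  (LinearMap.restrict_coe_apply _ _ _).symm
              _ = _ := by rw [hMe]; push_cast; rfl
          · calc M (f : V) = ((M.restrict hMo) f : V) :=
                  (LinearMap.restrict_coe_apply _ _ _).symm
              _ = _ := by rw [hMf]; push_cast; rfl

/-- **Jordan's lemma for three projections.** Let `V` be a finite-dimensional complex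
inner product space and `P, M, K` orthogonal projections with `[K, P] = [K, M] = 0`.
Then `V` decomposes as an internal direct sum of pairwise orthogonal subspaces `H α`
of dimension at most `2`, each invariant under `P`, `M` and `K`, and on every
two-dimensional block there is an orthonormal basis `(e, f)` and an angle `θ` in which
`P` is `diag(1,0)` and `M` is `[[cos²θ, cosθ·sinθ], [cosθ·sinθ, sin²θ]]`. -/
theorem jordan_lemma_projections {V : Type} [NormedAddCommGroup V]
    [InnerProductSpace ℂ V] [FiniteDimensional ℂ V]
    (P M K : V →ₗ[ℂ] V)
    (hPsa : LinearMap.adjoint P = P) (hPproj : P ∘ₗ P = P)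
    (hMsa : LinearMap.adjoint M = M) (hMproj : M ∘ₗ M = M)
    (hKsa : LinearMap.adjoint K = K) (hKproj : K ∘ₗ K = K)
    (hKP : K ∘ₗ P = P ∘ₗ K) (hKM : K ∘ₗ M = M ∘ₗ K) :
    ∃ (k : ℕ) (H : Fin k → Submodule ℂ V),
      (∀ α β, α ≠ β → ∀ x ∈ H α, ∀ y ∈ H β, (inner ℂ x y : ℂ) = 0) ∧
      (⨆ α, H α) = ⊤ ∧
      (∀ α, Module.finrank ℂ (H α) ≤ 2) ∧
      (∀ α, ∀ ψ ∈ H α, P ψ ∈ H α ∧ M ψ ∈ H α ∧ K ψ ∈ H α) ∧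
      (∀ α, Module.finrank ℂ (H α) = 2 →
        ∃ (e f : V) (θ : ℝ),
          e ∈ H α ∧ f ∈ H α ∧ ‖e‖ = 1 ∧ ‖f‖ = 1 ∧ (inner ℂ e f : ℂ) = 0 ∧
          P e = e ∧ P f = 0 ∧
          M e = ((Real.cos θ : ℂ) ^ 2) • e + ((Real.cos θ : ℂ) * (Real.sin θ : ℂ)) • f ∧
          M f = ((Real.cos θ : ℂ) * (Real.sin θ : ℂ)) • e + ((Real.sin θ : ℂ) ^ 2) • f) :=
  jordan_aux (Module.finrank ℂ V) V P M K rfl hPsa hPproj hMsa hMproj hKsa hKproj hKP hKM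
end

section
/- Let ρ ∈ M_d(ℂ) be positive semidefinite with Tr(ρ) = 1, let M ∈ M_d(ℂ) be a Hermitian projection, and set ω = Tr(Mρ). If ω > 0 and ρ' = MρM / ω, then the trace norm satisfies ‖ρ' − ρ‖₁ ≤ 2√(1 − ω). -/
open Matrix
open scoped ComplexOrder

/-- The trace norm `‖A‖₁ = Tr √(AᴴA)` of a complex matrix. -/
noncomputable def traceNorm {d : ℕ} (A : Matrix (Fin d) (Fin d) ℂ) : ℝ :=
  ((Matrix.posSemidef_conjTranspose_mul_self A).1.eigenvectorUnitary.1 *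
    diagonal (((↑) : ℝ → ℂ) ∘ (√·) ∘ (Matrix.posSemidef_conjTranspose_mul_self A).1.eigenvalues) *
    (star (Matrix.posSemidef_conjTranspose_mul_self A).1.eigenvectorUnitary :
      Matrix (Fin d) (Fin d) ℂ)).trace.re

open scoped MatrixOrder

lemma traceNorm_herm {d : ℕ} (H : Matrix (Fin d) (Fin d) ℂ) (hH : H.IsHermitian) :
    traceNorm H = ∑ i, |hH.eigenvalues i| := by
  set U : Matrix (Fin d) (Fin d) ℂ := (hH.eigenvectorUnitary : Matrix (Fin d) (Fin d) ℂ) with hU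
  have hU2 : star U * U = 1 := Unitary.coe_star_mul_self hH.eigenvectorUnitary
  have key2 : ∀ g : Fin d → ℂ,
      (U * diagonal g * star U) * (U * diagonal g * star U)
        = U * diagonal (fun i => (g i)^2) * star U := by
    intro g
    calc (U * diagonal g * star U) * (U * diagonal g * star U)
        = U * (diagonal g * (star U * U) * diagonal g) * star U := by
          simp only [Matrix.mul_assoc]
      _ = U * diagonal (fun i => (g i)^2) * star U := by
          rw [hU2, Matrix.mul_one, diagonal_mul_diagonal]
          simp [pow_two]
  set S : Matrix (Fin d) (Fin d) ℂ :=
    U * diagonal (fun i => (Complex.ofReal |hH.eigenvalues i|)) * star U with hS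
  have hSpsd : S.PosSemidef := by
    have hd : PosSemidef (diagonal (fun i => (Complex.ofReal |hH.eigenvalues i|))) :=
      posSemidef_diagonal_iff.mpr fun i => by
        exact_mod_cast Complex.zero_le_real.mpr (abs_nonneg _)
    rw [hS, star_eq_conjTranspose]
    exact hd.mul_mul_conjTranspose_same U
  have hS2 : S ^ 2 = Hᴴ * H := by
    rw [pow_two, hS, key2, hH.eq]
    conv_rhs => rw [hH.spectral_theorem, Unitary.conjStarAlgAut_apply]
    rw [key2]
    congr 2
    funext i
    simp [Function.comp, ← Complex.ofReal_pow, sq_abs]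
  have hsqrt : S = CFC.sqrt (Hᴴ * H) :=
    (CFC.sqrt_unique (by rw [← pow_two]; exact hS2) hSpsd.nonneg).symm
  have hdef : traceNorm H = (CFC.sqrt (Hᴴ * H)).trace.re := by
    rw [traceNorm, CFC.sqrt_eq_real_sqrt _ (posSemidef_conjTranspose_mul_self H).nonneg,
      cfcₙ_eq_cfc, (posSemidef_conjTranspose_mul_self H).1.cfc_eq, IsHermitian.cfc,
      Unitary.conjStarAlgAut_apply]
    rfl
  rw [hdef, ← hsqrt, hS, Matrix.trace_mul_cycle, hU2, Matrix.one_mul, trace_diagonal]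
  simp [Complex.ofReal_re]

lemma key_bound {d : ℕ} (X Y : Matrix (Fin d) (Fin d) ℂ) :
    traceNorm (X * Yᴴ + Y * Xᴴ) ≤
      2 * (Real.sqrt ((X * Xᴴ).trace.re) * Real.sqrt ((Y * Yᴴ).trace.re)) := by
  have hH : (X * Yᴴ + Y * Xᴴ).IsHermitian := by
    show _ᴴ = _
    rw [conjTranspose_add, conjTranspose_mul, conjTranspose_mul,
      conjTranspose_conjTranspose, conjTranspose_conjTranspose, add_comm]
  rw [traceNorm_herm _ hH]
  set U : Matrix (Fin d) (Fin d) ℂ := (hH.eigenvectorUnitary : Matrix (Fin d) (Fin d) ℂ) with hUdef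
  have hU1 : U * star U = 1 := Unitary.coe_mul_star_self hH.eigenvectorUnitary
  set v : Fin d → (Fin d → ℂ) := fun i => ⇑(hH.eigenvectorBasis i) with hvdef
  -- generic dot-product identity
  have hdot : ∀ (Z W : Matrix (Fin d) (Fin d) ℂ) (i : Fin d),
      star (v i) ⬝ᵥ ((Z * Wᴴ) *ᵥ v i) = star (Zᴴ *ᵥ v i) ⬝ᵥ (Wᴴ *ᵥ v i) := by
    intro Z W i
    rw [← mulVec_mulVec, dotProduct_mulVec, star_mulVec, conjTranspose_conjTranspose]
  -- generic frobenius sum identity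
  have hsum : ∀ (Z : Matrix (Fin d) (Fin d) ℂ),
      ∑ i, (∑ j, ‖(Zᴴ *ᵥ v i) j‖^2) = (Z * Zᴴ).trace.re := by
    intro Z
    have hmv : ∀ i j, (Zᴴ *ᵥ v i) j = (Zᴴ * U) j i := by
      intro i j
      simp [mulVec, mul_apply, dotProduct, hUdef, hvdef]
    have htr : ((Zᴴ * U)ᴴ * (Zᴴ * U)).trace = (Z * Zᴴ).trace := by
      rw [conjTranspose_mul, conjTranspose_conjTranspose]
      calc (Uᴴ * Z * (Zᴴ * U)).trace = (Uᴴ * (Z * Zᴴ) * U).trace := by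
            rw [Matrix.mul_assoc, Matrix.mul_assoc, Matrix.mul_assoc]
        _ = (U * Uᴴ * (Z * Zᴴ)).trace := by rw [Matrix.trace_mul_cycle]
        _ = (Z * Zᴴ).trace := by rw [← star_eq_conjTranspose, hU1, Matrix.one_mul]
    simp only [hmv]
    rw [← htr]
    rw [Matrix.trace]
    simp only [Complex.re_sum, Matrix.diag_apply, mul_apply, conjTranspose_apply]
    congr 1
    funext i
    congr 1
    funext j
    have hw : ∀ w : ℂ, (star w * w).re = ‖w‖^2 := by
      intro w
      rw [Complex.star_def, mul_comm, Complex.mul_conj, Complex.ofReal_re,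
        ← Complex.sq_norm]
    exact (hw _).symm
  set a : Fin d → Fin d → ℂ := fun i => Xᴴ *ᵥ v i with hadef
  set b : Fin d → Fin d → ℂ := fun i => Yᴴ *ᵥ v i with hbdef
  set f : Fin d → ℝ := fun i => ∑ j, ‖a i j‖^2 with hfdef
  set g : Fin d → ℝ := fun i => ∑ j, ‖b i j‖^2 with hgdef
  have habs : ∀ i, |hH.eigenvalues i| ≤ 2 * (Real.sqrt (f i) * Real.sqrt (g i)) := by
    intro i
    have hcomp : star (v i) ⬝ᵥ ((X * Yᴴ + Y * Xᴴ) *ᵥ v i)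
        = star (a i) ⬝ᵥ b i + star (star (a i) ⬝ᵥ b i) := by
      rw [add_mulVec, dotProduct_add, hdot X Y i, hdot Y X i]
      congr 1
      rw [star_dotProduct]
    rw [hH.eigenvalues_eq i, hcomp]
    set z : ℂ := star (a i) ⬝ᵥ b i with hzdef
    have hre : RCLike.re (z + star z) = 2 * z.re := by
      simp only [RCLike.star_def, Complex.add_re, RCLike.conj_re]
      simp [RCLike.re_to_complex]
      ring
    rw [hre]
    have hz1 : |z.re| ≤ ‖z‖ := Complex.abs_re_le_norm z
    have hz2 : ‖z‖ ≤ ∑ j, ‖a i j‖ * ‖b i j‖ := by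
      rw [hzdef, dotProduct]
      refine (norm_sum_le _ _).trans ?_
      refine Finset.sum_le_sum fun j _ => ?_
      rw [Pi.star_apply, norm_mul, norm_star]
    have hz3 : (∑ j, ‖a i j‖ * ‖b i j‖) ≤ Real.sqrt (f i) * Real.sqrt (g i) :=
      Real.sum_mul_le_sqrt_mul_sqrt _ _ _
    calc |2 * z.re| = 2 * |z.re| := by rw [abs_mul]; norm_num
      _ ≤ 2 * (Real.sqrt (f i) * Real.sqrt (g i)) := by
          have := hz1.trans (hz2.trans hz3)
          linarith
  calc ∑ i, |hH.eigenvalues i|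
      ≤ ∑ i, 2 * (Real.sqrt (f i) * Real.sqrt (g i)) :=
        Finset.sum_le_sum fun i _ => habs i
    _ = 2 * ∑ i, Real.sqrt (f i) * Real.sqrt (g i) := by rw [Finset.mul_sum]
    _ ≤ 2 * (Real.sqrt (∑ i, f i) * Real.sqrt (∑ i, g i)) := by
        have := Real.sum_sqrt_mul_sqrt_le (f := f) (g := g) Finset.univ
          (fun i => Finset.sum_nonneg fun j _ => sq_nonneg _)
          (fun i => Finset.sum_nonneg fun j _ => sq_nonneg _)
        linarith
    _ = 2 * (Real.sqrt ((X * Xᴴ).trace.re) * Real.sqrt ((Y * Yᴴ).trace.re)) := by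
        rw [hfdef, hgdef]
        rw [show (∑ i, ∑ j, ‖a i j‖^2) = (X * Xᴴ).trace.re from hsum X,
          show (∑ i, ∑ j, ‖b i j‖^2) = (Y * Yᴴ).trace.re from hsum Y]

lemma trace_self_re_nonneg {d : ℕ} (X : Matrix (Fin d) (Fin d) ℂ) :
    0 ≤ (X * Xᴴ).trace.re := by
  rw [Matrix.trace]
  rw [Complex.re_sum]
  refine Finset.sum_nonneg fun i _ => ?_
  rw [Matrix.diag_apply, mul_apply, Complex.re_sum]
  refine Finset.sum_nonneg fun j _ => ?_
  rw [conjTranspose_apply, Complex.star_def, Complex.mul_conj, Complex.ofReal_re]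
  exact Complex.normSq_nonneg _

/-- **Gentle measurement lemma.** If `ρ` is a density matrix, `M` a Hermitian
projection, `ω = Tr(Mρ) > 0` and `ρ' = MρM/ω`, then `‖ρ' − ρ‖₁ ≤ 2√(1 − ω)`. -/
theorem gentle_measurement {d : ℕ} (ρ M : Matrix (Fin d) (Fin d) ℂ)
    (hρ : ρ.PosSemidef) (hρtr : ρ.trace = 1)
    (hMsa : M.IsHermitian) (hMproj : M * M = M)
    (ω : ℝ) (hω : ω = ((M * ρ).trace).re) (hωpos : 0 < ω)
    (ρ' : Matrix (Fin d) (Fin d) ℂ) (hρ' : ρ' = ((ω : ℂ))⁻¹ • (M * ρ * M)) :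
    traceNorm (ρ' - ρ) ≤ 2 * Real.sqrt (1 - ω) := by
  -- the square root of ρ
  set B : Matrix (Fin d) (Fin d) ℂ := CFC.sqrt ρ with hBdef
  have hBB : B * B = ρ := CFC.sqrt_mul_sqrt_self ρ hρ.nonneg
  have hB : Bᴴ = B := (CFC.sqrt_nonneg ρ).posSemidef.1
  set c : ℝ := Real.sqrt ω with hcdef
  have hcpos : 0 < c := Real.sqrt_pos.mpr hωpos
  have hc2 : c * c = ω := Real.mul_self_sqrt hωpos.le
  have hcC : (c : ℂ) * (c : ℂ) = (ω : ℂ) := by exact_mod_cast congrArg Complex.ofReal hc2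
  have hcne : (c : ℂ) ≠ 0 := by exact_mod_cast hcpos.ne'
  -- trace of Mρ is the real number ω
  have hωc : (M * ρ).trace = (ω : ℂ) := by
    have h1 : (starRingEnd ℂ) ((M * ρ).trace) = (M * ρ).trace := by
      have h2 : ((M * ρ)ᴴ).trace = star ((M * ρ).trace) := trace_conjTranspose (M * ρ)
      rw [conjTranspose_mul, hρ.1, hMsa, trace_mul_comm] at h2
      exact h2.symm
    rw [hω]
    exact (Complex.conj_eq_iff_re.mp h1).symm
  set C : Matrix (Fin d) (Fin d) ℂ := ((c : ℂ))⁻¹ • (M * B) with hCdef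
  have hCH : Cᴴ = ((c : ℂ))⁻¹ • (B * M) := by
    rw [hCdef, conjTranspose_smul, conjTranspose_mul, hB, hMsa.eq, star_inv₀]
    rw [Complex.star_def, Complex.conj_ofReal]
  have hCC : C * Cᴴ = ρ' := by
    rw [hCdef, hCH, smul_mul_assoc, mul_smul_comm, smul_smul, hρ']
    have : M * B * (B * M) = M * ρ * M := by rw [← hBB]; noncomm_ring
    rw [this, ← hcC, _root_.mul_inv_rev]
  -- traces of the four products
  have tBB : (B * Bᴴ).trace = 1 := by rw [hB, hBB, hρtr]
  have hMρM : (M * ρ * M).trace = (ω : ℂ) := by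
    rw [trace_mul_cycle, hMproj, hωc]
  have tCC : (C * Cᴴ).trace = 1 := by
    rw [hCC, hρ', trace_smul, hMρM, smul_eq_mul,
      inv_mul_cancel₀ (by exact_mod_cast hωpos.ne')]
  have tCB : (C * Bᴴ).trace = (c : ℂ) := by
    rw [hB, hCdef, smul_mul_assoc, trace_smul, Matrix.mul_assoc, hBB, hωc, smul_eq_mul,
      ← hcC, ← mul_assoc, inv_mul_cancel₀ hcne, one_mul]
  have tBC : (B * Cᴴ).trace = (c : ℂ) := by
    rw [hCH, mul_smul_comm, trace_smul, ← Matrix.mul_assoc, hBB, trace_mul_comm, hωc,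
      smul_eq_mul, ← hcC, ← mul_assoc, inv_mul_cancel₀ hcne, one_mul]
  -- the two factors
  set X : Matrix (Fin d) (Fin d) ℂ := C - B with hXdef
  set Y : Matrix (Fin d) (Fin d) ℂ := ((2 : ℂ))⁻¹ • (C + B) with hYdef
  have hYH : Yᴴ = ((2 : ℂ))⁻¹ • (Cᴴ + Bᴴ) := by
    rw [hYdef, conjTranspose_smul, conjTranspose_add]
    norm_num
  have hXH : Xᴴ = Cᴴ - Bᴴ := by rw [hXdef, conjTranspose_sub]
  have hdiff : ρ' - ρ = X * Yᴴ + Y * Xᴴ := by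
    rw [hXdef, hYdef, hYH, hXH, mul_smul_comm, smul_mul_assoc, ← smul_add]
    have hexp : (C - B) * (Cᴴ + Bᴴ) + (C + B) * (Cᴴ - Bᴴ)
        = (2 : ℂ) • (C * Cᴴ - B * Bᴴ) := by
      rw [two_smul]; noncomm_ring
    rw [hexp, smul_smul, inv_mul_cancel₀ (two_ne_zero), one_smul, hCC, hB, hBB]
  -- trace computations
  have tXX : (X * Xᴴ).trace = ((2 - 2 * c : ℝ) : ℂ) := by
    rw [hXdef, hXH, sub_mul, mul_sub, mul_sub, trace_sub, trace_sub, trace_sub,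
      tCC, tCB, tBC, tBB]
    push_cast; ring
  have tYY : (Y * Yᴴ).trace = (((2 + 2 * c) / 4 : ℝ) : ℂ) := by
    rw [hYdef, hYH, smul_mul_assoc, mul_smul_comm, smul_smul, add_mul, mul_add, mul_add,
      trace_smul, trace_add, trace_add, trace_add, tCC, tCB, tBC, tBB, smul_eq_mul]
    push_cast; ring
  have hXXre : (X * Xᴴ).trace.re = 2 - 2 * c := by rw [tXX, Complex.ofReal_re]
  have hYYre : (Y * Yᴴ).trace.re = (2 + 2 * c) / 4 := by rw [tYY, Complex.ofReal_re]
  have h2c : 0 ≤ 2 - 2 * c := by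
    have := trace_self_re_nonneg X
    rw [hXXre] at this
    exact this
  have hbound := key_bound X Y
  rw [← hdiff, hXXre, hYYre] at hbound
  refine hbound.trans (le_of_eq ?_)
  rw [← Real.sqrt_mul h2c]
  congr 1
  have harg : (2 - 2 * c) * ((2 + 2 * c) / 4) = 1 - ω := by
    rw [← hc2]; ring
  rw [harg]
end

section
/- Let φ ∈ M_d(ℂ) be positive semidefinite with Tr(φ) = 1, and let P, Q ∈ M_d(ℂ) be Hermitian projections with Tr(Pφ) > 0. Define ψ = PφP / Tr(Pφ). Then |Tr(Qψ) − Tr(Qφ)| ≤ 2√(1 − Tr(Pφ)). -/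
open Matrix
open scoped ComplexOrder

section helpers
variable {n : Type*} [Fintype n] [DecidableEq n]

open scoped MatrixOrder in
noncomputable def Matrix.PosSemidef.sqrt {A : Matrix n n ℂ} (_ : A.PosSemidef) : Matrix n n ℂ :=
  CFC.sqrt A

open scoped MatrixOrder in
lemma Matrix.PosSemidef.posSemidef_sqrt {A : Matrix n n ℂ} (hA : A.PosSemidef) :
    hA.sqrt.PosSemidef :=
  Matrix.nonneg_iff_posSemidef.mp (CFC.sqrt_nonneg A)

open scoped MatrixOrder in
lemma Matrix.PosSemidef.sqrt_mul_self {A : Matrix n n ℂ} (hA : A.PosSemidef) :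
    hA.sqrt * hA.sqrt = A :=
  CFC.sqrt_mul_sqrt_self A (Matrix.nonneg_iff_posSemidef.mpr hA)

lemma trace_sq_eq (A : Matrix n n ℂ) :
    (Aᴴ * A).trace = ((∑ i, ∑ j, ‖A i j‖^2 : ℝ) : ℂ) := by
  simp only [Matrix.trace, Matrix.diag, Matrix.mul_apply, Matrix.conjTranspose_apply]
  push_cast
  rw [Finset.sum_comm]
  refine Finset.sum_congr rfl fun i _ => Finset.sum_congr rfl fun j _ => ?_
  rw [mul_comm]
  exact_mod_cast Complex.mul_conj' (A i j)

lemma trace_CS (A B : Matrix n n ℂ) :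
    ‖(Aᴴ * B).trace‖ ≤
      Real.sqrt ((Aᴴ * A).trace.re) * Real.sqrt ((Bᴴ * B).trace.re) := by
  let u : EuclideanSpace ℂ (n × n) := WithLp.toLp 2 (fun p : n × n => A p.1 p.2)
  let v : EuclideanSpace ℂ (n × n) := WithLp.toLp 2 (fun p : n × n => B p.1 p.2)
  have h1 : (Aᴴ * B).trace = inner ℂ u v := by
    simp only [Matrix.trace, Matrix.diag, Matrix.mul_apply, Matrix.conjTranspose_apply,
      PiLp.inner_apply, RCLike.inner_apply, u, v, Fintype.sum_prod_type]
    rw [Finset.sum_comm]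
    exact Finset.sum_congr rfl fun i _ => Finset.sum_congr rfl fun j _ => mul_comm _ _
  have h2 : ‖u‖ = Real.sqrt ((Aᴴ * A).trace.re) := by
    rw [EuclideanSpace.norm_eq, trace_sq_eq]
    simp [Fintype.sum_prod_type, u, ← Complex.ofReal_pow]
  have h3 : ‖v‖ = Real.sqrt ((Bᴴ * B).trace.re) := by
    rw [EuclideanSpace.norm_eq, trace_sq_eq]
    simp [Fintype.sum_prod_type, v, ← Complex.ofReal_pow]
  rw [h1, ← h2, ← h3]
  exact norm_inner_le_norm u v

lemma trace_mul_psd {A B : Matrix n n ℂ} (hA : A.PosSemidef) (hB : B.PosSemidef) :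
    0 ≤ ((A * B).trace).re ∧ ((A * B).trace).im = 0 := by
  have e1 : (hB.sqrt * hA.sqrt)ᴴ * (hB.sqrt * hA.sqrt) = hA.sqrt * (B * hA.sqrt) := by
    rw [conjTranspose_mul, hA.posSemidef_sqrt.isHermitian.eq,
      hB.posSemidef_sqrt.isHermitian.eq, mul_assoc, ← mul_assoc hB.sqrt,
      hB.sqrt_mul_self]
  have key : (A * B).trace = ((hB.sqrt * hA.sqrt)ᴴ * (hB.sqrt * hA.sqrt)).trace := by
    rw [e1, Matrix.trace_mul_comm, Matrix.trace_mul_comm hA.sqrt, mul_assoc, hA.sqrt_mul_self]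
  constructor
  · rw [key, trace_sq_eq, Complex.ofReal_re]; positivity
  · rw [key, trace_sq_eq, Complex.ofReal_im]

lemma trace_mul_herm_im {A B : Matrix n n ℂ} (hA : A.IsHermitian) (hB : B.IsHermitian) :
    ((A * B).trace).im = 0 := by
  have h : star ((A * B).trace) = (A * B).trace := by
    rw [← Matrix.trace_conjTranspose, conjTranspose_mul, hA.eq, hB.eq,
      Matrix.trace_mul_comm]
  exact Complex.conj_eq_iff_im.mp h

lemma proj_posSemidef {P : Matrix n n ℂ} (hP : P.IsHermitian) (hPp : P * P = P) :
    P.PosSemidef := by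
  have h := Matrix.posSemidef_conjTranspose_mul_self P
  rwa [hP.eq, hPp] at h

lemma compl_herm {P : Matrix n n ℂ} (hP : P.IsHermitian) : (1 - P).IsHermitian := by
  simp [Matrix.IsHermitian, hP.eq]

lemma compl_proj {P : Matrix n n ℂ} (hPp : P * P = P) : (1 - P) * (1 - P) = 1 - P := by
  have : (1 - P) * (1 - P) = 1 - P - P + P * P := by noncomm_ring
  rw [this, hPp]; abel

lemma gentle_aux (ρ P Q : Matrix n n ℂ)
    (hρ : ρ.PosSemidef) (hρtr : ρ.trace = 1)
    (hP : P.IsHermitian) (hPp : P * P = P)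
    (hQ : Q.IsHermitian) (hQp : Q * Q = Q)
    (ω : ℝ) (hω : ω = ((P * ρ).trace).re) (hωpos : 0 < ω) :
    -(2 * Real.sqrt (1 - ω)) ≤ ω⁻¹ * ((Q * (P * ρ * P)).trace).re - ((Q * ρ).trace).re := by
  set s := hρ.sqrt with hs
  have hsH : sᴴ = s := hρ.posSemidef_sqrt.isHermitian
  have hss : s * s = ρ := hρ.sqrt_mul_self
  have h1PH : (1 - P)ᴴ = 1 - P := compl_herm hP
  have h1Pp : (1 - P) * (1 - P) = 1 - P := compl_proj hPp
  have hQpos : Q.PosSemidef := proj_posSemidef hQ hQp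
  have h1Qpos : (1 - Q).PosSemidef := proj_posSemidef (compl_herm hQ) (compl_proj hQp)
  have h1Ppos : (1 - P).PosSemidef := proj_posSemidef (compl_herm hP) (compl_proj hPp)
  have hPρP : (P * ρ * P).PosSemidef := by
    have h := hρ.mul_mul_conjTranspose_same P
    rwa [hP.eq] at h
  set q : ℝ := ((Q * ρ).trace).re with hqdef
  set t : ℝ := ((Q * (P * ρ * P)).trace).re with htdef
  have ht0 : 0 ≤ t := (trace_mul_psd hQpos hPρP).1
  have split : ∀ (R : Matrix n n ℂ), ((R * ρ).trace) + (((1 - R) * ρ).trace) = 1 := by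
    intro R
    rw [← Matrix.trace_add, show R * ρ + (1 - R) * ρ = ρ by noncomm_ring, hρtr]
  have hq1 : q ≤ 1 := by
    have h := congrArg Complex.re (split Q)
    have h0 := (trace_mul_psd h1Qpos hρ).1
    simp only [Complex.add_re, Complex.one_re] at h
    linarith
  have hω1 : ω ≤ 1 := by
    have h := congrArg Complex.re (split P)
    have h0 := (trace_mul_psd h1Ppos hρ).1
    simp only [Complex.add_re, Complex.one_re] at h
    linarith
  have h1ω : (((1 - P) * ρ).trace).re = 1 - ω := by
    have h := congrArg Complex.re (split P)
    simp only [Complex.add_re, Complex.one_re] at h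
    rw [hω]; linarith
  -- the three matrices for Cauchy-Schwarz
  set A0 : Matrix n n ℂ := (1 - P) * s with hA0
  set B1 : Matrix n n ℂ := Q * s with hB1
  set B2 : Matrix n n ℂ := Q * (P * s) with hB2
  have E3 : (A0ᴴ * A0).trace = ((1 - P) * ρ).trace := by
    rw [hA0, conjTranspose_mul, h1PH, hsH,
      show s * (1 - P) * ((1 - P) * s) = s * ((1 - P) * (1 - P)) * s by noncomm_ring,
      h1Pp, mul_assoc, Matrix.trace_mul_comm]
    congr 1
    rw [← hss]; noncomm_ring
  have E4 : (B1ᴴ * B1).trace = (Q * ρ).trace := by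
    rw [hB1, conjTranspose_mul, hQ.eq, hsH,
      show s * Q * (Q * s) = s * (Q * Q) * s by noncomm_ring,
      hQp, mul_assoc, Matrix.trace_mul_comm]
    congr 1
    rw [← hss]; noncomm_ring
  have E5 : (B2ᴴ * B2).trace = ((P * Q * P) * ρ).trace := by
    rw [hB2, conjTranspose_mul, conjTranspose_mul, hQ.eq, hP.eq, hsH,
      show s * P * Q * (Q * (P * s)) = s * (P * (Q * Q) * P) * s by noncomm_ring,
      hQp, Matrix.trace_mul_cycle, hss, Matrix.trace_mul_comm]
  have E1 : (B1ᴴ * A0).trace = (Q * ((1 - P) * ρ)).trace := by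
    rw [hB1, hA0, conjTranspose_mul, hQ.eq, hsH, Matrix.trace_mul_cycle,
      Matrix.trace_mul_comm]
    congr 1
    rw [← hss]; noncomm_ring
  have E2 : (A0ᴴ * B2).trace = (Q * (P * ρ * (1 - P))).trace := by
    rw [hA0, hB2, conjTranspose_mul, h1PH, hsH, Matrix.trace_mul_comm]
    congr 1
    rw [← hss]; noncomm_ring
  -- bound on (P Q P ρ)
  have hu1 : (((P * Q * P) * ρ).trace).re ≤ 1 := by
    have keyid : (P * Q * P) + (1 - P) + (P * (1 - Q) * P) = 1 - P + P * P := by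
      noncomm_ring
    rw [hPp] at keyid
    have keyid' : (P * Q * P) + (1 - P) + (P * (1 - Q) * P) = 1 := by
      rw [keyid]; abel
    have tsum : ((P * Q * P) * ρ).trace + ((1 - P) * ρ).trace
        + ((P * (1 - Q) * P) * ρ).trace = 1 := by
      rw [← Matrix.trace_add, ← Matrix.trace_add, ← add_mul, ← add_mul, keyid', one_mul, hρtr]
    have h1 := (trace_mul_psd h1Ppos hρ).1
    have hPQPpos : (P * (1 - Q) * P).PosSemidef := by
      have h := h1Qpos.mul_mul_conjTranspose_same P
      rwa [hP.eq] at h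
    have h2 := (trace_mul_psd hPQPpos hρ).1
    have h := congrArg Complex.re tsum
    simp only [Complex.add_re, Complex.one_re] at h
    linarith
  -- Cauchy-Schwarz bounds
  have hsq0 : (0:ℝ) ≤ Real.sqrt (1 - ω) := Real.sqrt_nonneg _
  have hc1 : ‖(Q * ((1 - P) * ρ)).trace‖ ≤ Real.sqrt (1 - ω) := by
    have h := trace_CS B1 A0
    rw [E1, E3, E4, h1ω] at h
    calc ‖(Q * ((1 - P) * ρ)).trace‖
        ≤ Real.sqrt q * Real.sqrt (1 - ω) := h
      _ ≤ 1 * Real.sqrt (1 - ω) :=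
          mul_le_mul_of_nonneg_right (Real.sqrt_le_one.mpr hq1) hsq0
      _ = Real.sqrt (1 - ω) := one_mul _
  have hc2 : ‖(Q * (P * ρ * (1 - P))).trace‖ ≤ Real.sqrt (1 - ω) := by
    have h := trace_CS A0 B2
    rw [E2, E3, E5, h1ω] at h
    calc ‖(Q * (P * ρ * (1 - P))).trace‖
        ≤ Real.sqrt (1 - ω) * Real.sqrt (((P * Q * P) * ρ).trace).re := h
      _ ≤ Real.sqrt (1 - ω) * 1 :=
          mul_le_mul_of_nonneg_left (Real.sqrt_le_one.mpr hu1) hsq0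
      _ = Real.sqrt (1 - ω) := mul_one _
  -- decomposition identity
  have hid : t = q - ((Q * ((1 - P) * ρ)).trace).re - ((Q * (P * ρ * (1 - P))).trace).re := by
    have mid : Q * (P * ρ * P) = Q * ρ - Q * ((1 - P) * ρ) - Q * (P * ρ * (1 - P)) := by
      noncomm_ring
    have h := congrArg (fun M : Matrix n n ℂ => (Matrix.trace M).re) mid
    simp only [Matrix.trace_sub, Complex.sub_re] at h
    rw [htdef, hqdef]
    exact h
  have hre1 := Complex.re_le_norm ((Q * ((1 - P) * ρ)).trace)
  have hre2 := Complex.re_le_norm ((Q * (P * ρ * (1 - P))).trace)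
  have hωinv : 1 ≤ ω⁻¹ := by
    have h := inv_anti₀ hωpos hω1
    rwa [inv_one] at h
  have hmul : 0 ≤ (ω⁻¹ - 1) * t := mul_nonneg (by linarith) ht0
  nlinarith [hmul]
end helpers

/-- If `φ` is a density matrix, `P, Q` Hermitian projections with `Tr(Pφ) > 0`, and
`ψ = PφP / Tr(Pφ)`, then `|Tr(Qψ) − Tr(Qφ)| ≤ 2√(1 − Tr(Pφ))`. -/
theorem trace_gentle_measurement {d : ℕ} (φ P Q : Matrix (Fin d) (Fin d) ℂ)
    (hφ : φ.PosSemidef) (hφtr : φ.trace = 1)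
    (hPsa : P.IsHermitian) (hPproj : P * P = P)
    (hQsa : Q.IsHermitian) (hQproj : Q * Q = Q)
    (ω : ℝ) (hω : ω = ((P * φ).trace).re) (hωpos : 0 < ω)
    (ψ : Matrix (Fin d) (Fin d) ℂ) (hψ : ψ = ((ω : ℂ))⁻¹ • (P * φ * P)) :
    ‖(Q * ψ).trace - (Q * φ).trace‖ ≤ 2 * Real.sqrt (1 - ω) := by
  have hPρP : (P * φ * P).PosSemidef := by
    have h := hφ.mul_mul_conjTranspose_same P
    rwa [hPsa.eq] at h
  set z : ℂ := (Q * ψ).trace - (Q * φ).trace with hz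
  have hQψ : (Q * ψ).trace = ((ω : ℂ))⁻¹ * (Q * (P * φ * P)).trace := by
    rw [hψ, Matrix.mul_smul, Matrix.trace_smul, smul_eq_mul]
  have htim : ((Q * (P * φ * P)).trace).im = 0 := trace_mul_herm_im hQsa hPρP.isHermitian
  have hqim : ((Q * φ).trace).im = 0 := trace_mul_herm_im hQsa hφ.isHermitian
  have hinv : ((ω : ℂ))⁻¹ = ((ω⁻¹ : ℝ) : ℂ) := by rw [Complex.ofReal_inv]
  have hzre : z.re = ω⁻¹ * ((Q * (P * φ * P)).trace).re - ((Q * φ).trace).re := by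
    rw [hz, Complex.sub_re, hQψ, hinv]
    simp [Complex.mul_re]
  have hzim : z.im = 0 := by
    rw [hz, Complex.sub_im, hQψ, hinv]
    simp [Complex.mul_im, htim, hqim]
  have habs : ‖z‖ = |z.re| := by
    have hz' : z = ((z.re : ℝ) : ℂ) := Complex.ext rfl (by simp [hzim])
    rw [hz', Complex.norm_real]
    simp
  rw [habs, abs_le]
  constructor
  · have h := gentle_aux φ P Q hφ hφtr hPsa hPproj hQsa hQproj ω hω hωpos
    rw [hzre]; linarith
  · -- apply aux to 1 - Q
    have h := gentle_aux φ P (1 - Q) hφ hφtr hPsa hPproj (compl_herm hQsa)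
      (compl_proj hQproj) ω hω hωpos
    -- rewrite the (1-Q) traces
    have e1 : (((1 - Q) * (P * φ * P)).trace) = (P * φ).trace - (Q * (P * φ * P)).trace := by
      rw [show (1 - Q) * (P * φ * P) = P * φ * P - Q * (P * φ * P) by noncomm_ring,
        Matrix.trace_sub, Matrix.trace_mul_cycle, ← mul_assoc, hPproj]
    have e2 : (((1 - Q) * φ).trace) = φ.trace - (Q * φ).trace := by
      rw [show (1 - Q) * φ = φ - Q * φ by noncomm_ring, Matrix.trace_sub]
    have hPφim : ((P * φ).trace).im = 0 := trace_mul_herm_im hPsa hφ.isHermitian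
    rw [e1, e2, hφtr] at h
    simp only [Complex.sub_re, Complex.one_re] at h
    rw [← hω] at h
    have hωne : ω ≠ 0 := ne_of_gt hωpos
    have : ω⁻¹ * (ω - ((Q * (P * φ * P)).trace).re)
        = 1 - ω⁻¹ * ((Q * (P * φ * P)).trace).re := by
      field_simp
    rw [this] at h
    rw [hzre]; linarith
end

section
/- Let Π, M ∈ M_d(ℂ) be Hermitian projections and let φ ∈ M_d(ℂ) be positive semidefinite with Tr(φ) = 1. Set ω = Tr(Mφ), μ = |1/2 − Tr(MΠφΠ) − Tr(M(I−Π)φ(I−Π))|, and assume ω > 0. Let φ' = MφM / ω. Then |1/2 − Tr(MΠφ'Π) − Tr(M(I−Π)φ'(I−Π))| ≤ μ + 4√(1 − ω). -/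
open Matrix
open scoped ComplexOrder

namespace MuTransferAux
variable {d : ℕ}

noncomputable def toES (X : Matrix (Fin d) (Fin d) ℂ) : EuclideanSpace ℂ (Fin d × Fin d) :=
  (WithLp.equiv 2 _).symm (fun p => X p.1 p.2)

lemma trace_eq_inner (X Y : Matrix (Fin d) (Fin d) ℂ) :
    (Xᴴ * Y).trace = inner (𝕜 := ℂ) (toES X) (toES Y) := by
  have h : (inner (𝕜 := ℂ) (toES X) (toES Y) : ℂ)
      = ∑ i : Fin d, ∑ j : Fin d, star (X i j) * Y i j := by
    rw [PiLp.inner_apply]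
    simp only [RCLike.inner_apply]
    rw [Fintype.sum_prod_type]
    simp only [toES, WithLp.equiv_symm_apply, WithLp.ofLp_toLp, starRingEnd_apply, mul_comm]
  rw [h, Finset.sum_comm]
  simp [Matrix.trace, Matrix.diag, Matrix.mul_apply, Matrix.conjTranspose_apply]

lemma re_trace_sq_nonneg (X : Matrix (Fin d) (Fin d) ℂ) : 0 ≤ ((Xᴴ * X).trace).re := by
  rw [trace_eq_inner]
  have := @inner_self_nonneg ℂ _ _ _ _ (toES X)
  simpa using this

lemma cs_trace (X Y : Matrix (Fin d) (Fin d) ℂ) :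
    ‖(Xᴴ * Y).trace‖ ≤ Real.sqrt ((Xᴴ * X).trace.re) * Real.sqrt ((Yᴴ * Y).trace.re) := by
  rw [trace_eq_inner, trace_eq_inner, trace_eq_inner]
  have h1 := @inner_self_eq_norm_sq ℂ _ _ _ _ (toES X)
  have h2 := @inner_self_eq_norm_sq ℂ _ _ _ _ (toES Y)
  rw [RCLike.re_to_complex] at h1 h2
  rw [h1, h2, Real.sqrt_sq (norm_nonneg _), Real.sqrt_sq (norm_nonneg _)]
  exact norm_inner_le_norm _ _

lemma psd_re_trace_nonneg {A : Matrix (Fin d) (Fin d) ℂ} (hA : A.PosSemidef) :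
    0 ≤ (A.trace).re := by
  obtain ⟨B, rfl⟩ : ∃ B : Matrix (Fin d) (Fin d) ℂ, A = Bᴴ * B := by
    open scoped MatrixOrder in exact CStarAlgebra.nonneg_iff_eq_star_mul_self.mp hA.nonneg
  exact re_trace_sq_nonneg B

lemma mul_psd_re_trace_nonneg {A C : Matrix (Fin d) (Fin d) ℂ}
    (hA : A.PosSemidef) (hC : C.PosSemidef) : 0 ≤ ((A * C).trace).re := by
  obtain ⟨B, rfl⟩ : ∃ B : Matrix (Fin d) (Fin d) ℂ, A = Bᴴ * B := by
    open scoped MatrixOrder in exact CStarAlgebra.nonneg_iff_eq_star_mul_self.mp hA.nonneg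
  have h : (Bᴴ * B * C).trace = (B * C * Bᴴ).trace := by
    rw [Matrix.mul_assoc, Matrix.trace_mul_comm, Matrix.mul_assoc]
  rw [h]
  exact psd_re_trace_nonneg (hC.mul_mul_conjTranspose_same B)

lemma trace_mono {B ρ : Matrix (Fin d) (Fin d) ℂ}
    (hρ : ρ.PosSemidef) (h1B : (1 - B).PosSemidef) :
    ((B * ρ).trace).re ≤ (ρ.trace).re := by
  have h := mul_psd_re_trace_nonneg h1B hρ
  have hexp : ((1 - B) * ρ).trace = ρ.trace - (B * ρ).trace := by
    rw [sub_mul, one_mul, Matrix.trace_sub]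
  rw [hexp] at h
  simp only [Complex.sub_re] at h
  linarith

lemma proj_one_sub_identity {R : Type*} [Ring R] (p m : R) (hp : p*p=p) (hm : m*m=m) :
    1 - (p*m*p + (1-p)*m*(1-p)) = p*(1-m)*p + (1-p)*(1-m)*(1-p) := by
  have hp' : ∀ x : R, p*(p*x) = p*x := fun x => by rw [← mul_assoc, hp]
  have hm' : ∀ x : R, m*(m*x) = m*x := fun x => by rw [← mul_assoc, hm]
  simp only [mul_sub, sub_mul, mul_add, add_mul, mul_one, one_mul, mul_assoc,
    hp, hm, hp', hm', mul_zero, zero_mul]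
  abel

lemma proj_one_sub_sq_identity {R : Type*} [Ring R] (p m : R) (hp : p*p=p) (hm : m*m=m) :
    1 - (p*m*p + (1-p)*m*(1-p))*(p*m*p + (1-p)*m*(1-p))
      = (p*(1-m)*p + p*m*(1-p)*(m*p))
        + ((1-p)*(1-m)*(1-p) + (1-p)*m*(1-(1-p))*(m*(1-p))) := by
  have hp' : ∀ x : R, p*(p*x) = p*x := fun x => by rw [← mul_assoc, hp]
  have hm' : ∀ x : R, m*(m*x) = m*x := fun x => by rw [← mul_assoc, hm]
  simp only [mul_sub, sub_mul, mul_add, add_mul, mul_one, one_mul, mul_assoc,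
    hp, hm, hp', hm', mul_zero, zero_mul]
  abel

end MuTransferAux

open MuTransferAux

set_option maxHeartbeats 2000000 in
/-- Transfer of the near-indistinguishability quantity `μ` from the state `φ` to the
renormalized post-measurement state `φ' = MφM/ω`: with `ω = Tr(Mφ) > 0` and
`μ = |1/2 − Tr(MPφP) − Tr(M(I−P)φ(I−P))|`, one has
`|1/2 − Tr(MPφ'P) − Tr(M(I−P)φ'(I−P))| ≤ μ + 4√(1 − ω)`. -/
theorem mu_transfer {d : ℕ} (P M φ : Matrix (Fin d) (Fin d) ℂ)
    (hPsa : P.IsHermitian) (hPproj : P * P = P)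
    (hMsa : M.IsHermitian) (hMproj : M * M = M)
    (hφ : φ.PosSemidef) (hφtr : φ.trace = 1)
    (ω μ : ℝ) (hω : ω = ((M * φ).trace).re) (hωpos : 0 < ω)
    (hμ : μ = |1 / 2 - ((M * P * φ * P).trace).re
      - ((M * (1 - P) * φ * (1 - P)).trace).re|)
    (φ' : Matrix (Fin d) (Fin d) ℂ) (hφ' : φ' = ((ω : ℂ))⁻¹ • (M * φ * M)) :
    |1 / 2 - ((M * P * φ' * P).trace).re
      - ((M * (1 - P) * φ' * (1 - P)).trace).re| ≤ μ + 4 * Real.sqrt (1 - ω) := by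
  classical
  -- basic algebra of the projections
  have hQproj : (1 - P) * (1 - P) = 1 - P := by
    have h : (1 - P) * (1 - P) = 1 - P - P + P * P := by noncomm_ring
    rw [h, hPproj]; abel
  have h1Mproj : (1 - M) * (1 - M) = 1 - M := by
    have h : (1 - M) * (1 - M) = 1 - M - M + M * M := by noncomm_ring
    rw [h, hMproj]; abel
  have hQsa : (1 - P)ᴴ = 1 - P := by
    rw [Matrix.conjTranspose_sub, Matrix.conjTranspose_one, hPsa.eq]
  have h1Msa : (1 - M)ᴴ = 1 - M := by
    rw [Matrix.conjTranspose_sub, Matrix.conjTranspose_one, hMsa.eq]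
  have hM1sa : (M - 1)ᴴ = M - 1 := by
    rw [Matrix.conjTranspose_sub, Matrix.conjTranspose_one, hMsa.eq]
  have mkpsd : ∀ A : Matrix (Fin d) (Fin d) ℂ, Aᴴ = A → A * A = A → A.PosSemidef :=
    fun A hs hproj => by
      have := posSemidef_conjTranspose_mul_self A; rwa [hs, hproj] at this
  have hMpsd : M.PosSemidef := mkpsd M hMsa.eq hMproj
  have h1Mpsd : (1 - M).PosSemidef := mkpsd _ h1Msa h1Mproj
  have hPpsd : P.PosSemidef := mkpsd P hPsa.eq hPproj
  have hQpsd : (1 - P).PosSemidef := mkpsd _ hQsa hQproj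
  set B : Matrix (Fin d) (Fin d) ℂ := P * M * P + (1 - P) * M * (1 - P) with hBdef
  have hBsa : Bᴴ = B := by
    simp [hBdef, Matrix.conjTranspose_add, Matrix.conjTranspose_mul,
      Matrix.conjTranspose_sub, Matrix.conjTranspose_one, hPsa.eq, hMsa.eq, Matrix.mul_assoc]
  have hBpsd : B.PosSemidef := by
    have h1 := hMpsd.conjTranspose_mul_mul_same P
    have h2 := hMpsd.conjTranspose_mul_mul_same (1 - P)
    rw [hPsa.eq] at h1; rw [hQsa] at h2
    exact h1.add h2
  have h1Bpsd : (1 - B).PosSemidef := by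
    rw [hBdef, proj_one_sub_identity P M hPproj hMproj]
    have h1 := h1Mpsd.conjTranspose_mul_mul_same P
    have h2 := h1Mpsd.conjTranspose_mul_mul_same (1 - P)
    rw [hPsa.eq] at h1; rw [hQsa] at h2
    exact h1.add h2
  have h1B2psd : (1 - B * B).PosSemidef := by
    rw [hBdef, proj_one_sub_sq_identity P M hPproj hMproj]
    have h1 := h1Mpsd.conjTranspose_mul_mul_same P
    rw [hPsa.eq] at h1
    have h2 := hQpsd.conjTranspose_mul_mul_same (M * P)
    have h2' : (M * P)ᴴ = P * M := by rw [Matrix.conjTranspose_mul, hPsa.eq, hMsa.eq]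
    rw [h2'] at h2
    have h3 := h1Mpsd.conjTranspose_mul_mul_same (1 - P)
    rw [hQsa] at h3
    have h4 := hPpsd.conjTranspose_mul_mul_same (M * (1 - P))
    have h4' : (M * (1 - P))ᴴ = (1 - P) * M := by
      rw [Matrix.conjTranspose_mul, hQsa, hMsa.eq]
    rw [h4'] at h4
    rw [sub_sub_cancel]
    exact (h1.add h2).add (h3.add h4)
  -- square root of φ
  open scoped MatrixOrder in set s : Matrix (Fin d) (Fin d) ℂ := CFC.sqrt φ with hsdef
  have hss : s * s = φ := by open scoped MatrixOrder in exact CFC.sqrt_mul_sqrt_self φ hφ.nonneg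
  have hssa : sᴴ = s := by
    open scoped MatrixOrder in exact (CFC.sqrt_nonneg φ).posSemidef.isHermitian.eq
  -- MφM is PSD
  have hMφM : (M * φ * M).PosSemidef := by
    have h := hφ.mul_mul_conjTranspose_same M
    rwa [hMsa.eq] at h
  -- ω ≤ 1
  have hωtr : ((M * φ).trace).re = ω := hω.symm
  have hφtre : (φ.trace).re = 1 := by rw [hφtr]; simp
  have hω1 : ω ≤ 1 := by
    have := trace_mono hφ h1Mpsd
    rw [hωtr, hφtre] at this; exact this
  -- trace of MφM
  have hTMφM : ((M * φ * M).trace).re = ω := by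
    rw [Matrix.trace_mul_comm, ← Matrix.mul_assoc, hMproj, hωtr]
  -- the three matrices for Cauchy-Schwarz
  set X : Matrix (Fin d) (Fin d) ℂ := (M - 1) * s with hXdef
  set Y : Matrix (Fin d) (Fin d) ℂ := B * (M * s) with hYdef
  set U : Matrix (Fin d) (Fin d) ℂ := B * s with hUdef
  have hXc : Xᴴ = s * (M - 1) := by rw [hXdef, Matrix.conjTranspose_mul, hM1sa, hssa]
  have hYc : Yᴴ = (s * M) * B := by
    rw [hYdef, Matrix.conjTranspose_mul, Matrix.conjTranspose_mul, hMsa.eq, hssa, hBsa]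
  have hUc : Uᴴ = s * B := by rw [hUdef, Matrix.conjTranspose_mul, hssa, hBsa]
  have hMM1 : (M - 1) * (M - 1) = 1 - M := by
    have h : (M - 1) * (M - 1) = M * M - M - M + 1 := by noncomm_ring
    rw [h, hMproj]; abel
  -- Re Tr(XᴴX) = 1 - ω
  have hXX : ((Xᴴ * X).trace).re = 1 - ω := by
    have e : Xᴴ * X = s * ((M - 1) * ((M - 1) * s)) := by rw [hXc, hXdef]; noncomm_ring
    have e2 : ((M - 1) * ((M - 1) * s)) * s = (1 - M) * φ := by
      rw [← hss, ← hMM1]; noncomm_ring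
    rw [e, Matrix.trace_mul_comm, e2, sub_mul, one_mul, Matrix.trace_sub]
    simp only [Complex.sub_re]
    rw [hωtr, hφtre]
  -- Re Tr(YᴴY) ≤ 1
  have hYY : ((Yᴴ * Y).trace).re ≤ 1 := by
    have e : Yᴴ * Y = (s * M) * (B * (B * (M * s))) := by rw [hYc, hYdef]; noncomm_ring
    have e2 : (B * (B * (M * s))) * (s * M) = (B * B) * (M * φ * M) := by
      rw [← hss]; noncomm_ring
    rw [e, Matrix.trace_mul_comm, e2]
    have := trace_mono hMφM h1B2psd
    rw [hTMφM] at this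
    linarith
  -- Re Tr(UᴴU) ≤ 1
  have hUU : ((Uᴴ * U).trace).re ≤ 1 := by
    have e : Uᴴ * U = s * (B * (B * s)) := by rw [hUc, hUdef]; noncomm_ring
    have e2 : (B * (B * s)) * s = (B * B) * φ := by rw [← hss]; noncomm_ring
    rw [e, Matrix.trace_mul_comm, e2]
    have := trace_mono hφ h1B2psd
    rw [hφtre] at this
    exact this
  -- sqrt facts
  have h1ωnn : (0:ℝ) ≤ 1 - ω := by linarith
  have hsqnn : 0 ≤ Real.sqrt (1 - ω) := Real.sqrt_nonneg _
  have hsqsq : Real.sqrt (1 - ω) * Real.sqrt (1 - ω) = 1 - ω := Real.mul_self_sqrt h1ωnn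
  have hXXnn := re_trace_sq_nonneg X
  have hYYnn := re_trace_sq_nonneg Y
  have hUUnn := re_trace_sq_nonneg U
  -- c1 and c2
  set c1 : ℂ := ((M - 1) * (B * (M * φ))).trace with hc1def
  set c2 : ℂ := (B * ((M - 1) * φ)).trace with hc2def
  have hc1 : |c1.re| ≤ Real.sqrt (1 - ω) := by
    have e : Xᴴ * Y = s * ((M - 1) * (B * (M * s))) := by rw [hXc, hYdef]; noncomm_ring
    have e2 : ((M - 1) * (B * (M * s))) * s = (M - 1) * (B * (M * φ)) := by
      rw [← hss]; noncomm_ring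
    have etr : (Xᴴ * Y).trace = c1 := by rw [e, Matrix.trace_mul_comm, e2, hc1def]
    have hcs := cs_trace X Y
    rw [etr, hXX] at hcs
    have h1 : |c1.re| ≤ ‖c1‖ := Complex.abs_re_le_norm c1
    have h2 : Real.sqrt ((Yᴴ * Y).trace.re) ≤ 1 := Real.sqrt_le_one.mpr hYY
    nlinarith [norm_nonneg c1, Real.sqrt_nonneg ((Yᴴ * Y).trace.re)]
  have hc2 : |c2.re| ≤ Real.sqrt (1 - ω) := by
    have e : Uᴴ * X = s * (B * ((M - 1) * s)) := by rw [hUc, hXdef]; noncomm_ring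
    have e2 : (B * ((M - 1) * s)) * s = B * ((M - 1) * φ) := by rw [← hss]; noncomm_ring
    have etr : (Uᴴ * X).trace = c2 := by rw [e, Matrix.trace_mul_comm, e2, hc2def]
    have hcs := cs_trace U X
    rw [etr, hXX] at hcs
    have h1 : |c2.re| ≤ ‖c2‖ := Complex.abs_re_le_norm c2
    have h2 : Real.sqrt ((Uᴴ * U).trace.re) ≤ 1 := Real.sqrt_le_one.mpr hUU
    nlinarith [norm_nonneg c2, Real.sqrt_nonneg ((Uᴴ * U).trace.re)]
  -- the decomposition of Tr(B M φ M)
  set a : ℝ := ((B * φ).trace).re with hadef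
  set T : ℝ := ((B * (M * φ * M)).trace).re with hTdef
  have hdecomp : T = c1.re + c2.re + a := by
    have e1 : B * (M * φ * M) = B * (M * φ) + (B * (M * φ)) * (M - 1) := by noncomm_ring
    have e2 : B * (M * φ) = B * φ + B * ((M - 1) * φ) := by noncomm_ring
    have etr1 : ((B * (M * φ)) * (M - 1)).trace = c1 := by
      rw [Matrix.trace_mul_comm, hc1def]
    rw [hTdef, e1, Matrix.trace_add, etr1, e2, Matrix.trace_add]
    simp only [Complex.add_re, hc2def, hadef]
    ring
  -- bounds on T
  have hTnn : 0 ≤ T := mul_psd_re_trace_nonneg hBpsd hMφM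
  have hTle : T ≤ ω := by
    have := trace_mono hMφM h1Bpsd
    rw [hTMφM] at this
    exact this
  -- a' = ω⁻¹ * T
  set a' : ℝ := ((B * φ').trace).re with ha'def
  have ha' : a' = ω⁻¹ * T := by
    rw [ha'def, hφ', Matrix.mul_smul, Matrix.trace_smul]
    rw [← Complex.ofReal_inv]
    simp only [smul_eq_mul, Complex.re_ofReal_mul]
    rw [hTdef]
  -- rewrite the goal and μ in terms of a, a'
  have key : ∀ ρ : Matrix (Fin d) (Fin d) ℂ,
      1 / 2 - ((M * P * ρ * P).trace).re - ((M * (1 - P) * ρ * (1 - P)).trace).re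
        = 1 / 2 - ((B * ρ).trace).re := by
    intro ρ
    have e1 : (M * P * ρ * P).trace = ((P * M * P) * ρ).trace := by
      rw [Matrix.trace_mul_comm]; congr 1; noncomm_ring
    have e2 : (M * (1 - P) * ρ * (1 - P)).trace = (((1 - P) * M * (1 - P)) * ρ).trace := by
      rw [Matrix.trace_mul_comm]; congr 1; noncomm_ring
    rw [e1, e2, hBdef, Matrix.add_mul, Matrix.trace_add]
    simp only [Complex.add_re]
    ring
  rw [key φ', hμ, key φ, ← hadef, ← ha'def]
  -- final numeric estimate
  have hωinv1 : 1 ≤ ω⁻¹ := (one_le_inv₀ hωpos).mpr hω1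
  have hterm1 : (ω⁻¹ - 1) * T ≤ 1 - ω := by
    have h1 : (ω⁻¹ - 1) * T ≤ (ω⁻¹ - 1) * ω :=
      mul_le_mul_of_nonneg_left hTle (by linarith)
    have h2 : (ω⁻¹ - 1) * ω = 1 - ω := by field_simp
    linarith
  have hdiff : |a' - a| ≤ 3 * Real.sqrt (1 - ω) := by
    have e : a' - a = (ω⁻¹ - 1) * T + c1.re + c2.re := by
      rw [ha']; nlinarith [hdecomp]
    have h1ω : 1 - ω ≤ Real.sqrt (1 - ω) := by nlinarith
    have habs1 : |(ω⁻¹ - 1) * T| ≤ 1 - ω := by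
      rw [abs_of_nonneg (by nlinarith)]
      exact hterm1
    calc |a' - a| = |(ω⁻¹ - 1) * T + c1.re + c2.re| := by rw [e]
      _ ≤ |(ω⁻¹ - 1) * T| + |c1.re| + |c2.re| := by
          exact (abs_add_le _ _).trans (by gcongr; exact abs_add_le _ _)
      _ ≤ (1 - ω) + Real.sqrt (1 - ω) + Real.sqrt (1 - ω) := by
          gcongr
      _ ≤ 3 * Real.sqrt (1 - ω) := by linarith
  calc |1 / 2 - a'| = |(1 / 2 - a) + (a - a')| := by congr 1; ring
    _ ≤ |1 / 2 - a| + |a - a'| := abs_add_le _ _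
    _ ≤ |1 / 2 - a| + 3 * Real.sqrt (1 - ω) := by rw [abs_sub_comm a a']; linarith
    _ ≤ |1 / 2 - a| + 4 * Real.sqrt (1 - ω) := by linarith
end
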